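/- arXiv:1310.0017 — 2 statements merged into one kernel-verified Lean document; each statement's English description precedes it below -/
import Mathlib

section
/- As a corollary of the conditional de Finetti bound: if p^{X_1,...,X_n} is a permutation-symmetric probability distribution on Σ^n, then there exists a probability measure μ on distributions q over Σ such that ‖ p^{X_1,...,X_k} − ∫ μ(dq) q^{⊗k} ‖_1 ≤ sqrt( 2 k² ln|Σ| / (n−k) ). -/
open Finset
open scoped Classical BigOperators

/-- Shannon entropy (in nats) of a distribution on a finite alphabet. -/
noncomputable def shEnt {α : Type*} [Fintype α] (p : α → ℝ) : ℝ :=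
  -∑ x, p x * Real.log (p x)

/-- Mutual information I(A:B) = H(A) + H(B) - H(AB) of a joint distribution. -/
noncomputable def mutInfo {α β : Type*} [Fintype α] [Fintype β] (p : α × β → ℝ) : ℝ :=
  shEnt (fun a => ∑ b, p (a, b)) + shEnt (fun b => ∑ a, p (a, b)) - shEnt p

/-- Conditional mutual information I(A:B|R): the average over values r of R of the
mutual information of the conditional distribution given R = r. -/
noncomputable def condMI {α β γ : Type*} [Fintype α] [Fintype β] [Fintype γ]
    (p : (α × β) × γ → ℝ) : ℝ :=
  ∑ r : γ, (∑ ab : α × β, p (ab, r)) *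
    mutInfo (fun ab : α × β => p (ab, r) / ∑ ab' : α × β, p (ab', r))

private lemma psi_hasDeriv {y : ℝ} (hy : 0 < y) :
    HasDerivAt (fun x : ℝ => (x + 1) * Real.log x - 2 * (x - 1))
      (Real.log y + y⁻¹ - 1) y := by
  have h1 : HasDerivAt (fun x : ℝ => (x + 1) * Real.log x)
      (1 * Real.log y + (y + 1) * y⁻¹) y :=
    ((hasDerivAt_id y).add_const 1).mul (Real.hasDerivAt_log hy.ne')
  have h2 : HasDerivAt (fun x : ℝ => 2 * (x - 1)) 2 y := by
    simpa using ((hasDerivAt_id y).sub_const 1).const_mul 2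
  have := h1.sub h2
  refine this.congr_deriv ?_
  rw [add_mul, mul_inv_cancel₀ hy.ne']
  ring

private lemma psi_deriv_nonneg {y : ℝ} (hy : 0 < y) :
    0 ≤ Real.log y + y⁻¹ - 1 := by
  have := Real.one_sub_inv_le_log_of_pos hy
  linarith

private lemma psi_nonneg {x : ℝ} (hx : 1 ≤ x) :
    0 ≤ (x + 1) * Real.log x - 2 * (x - 1) := by
  have hmono : MonotoneOn (fun x : ℝ => (x + 1) * Real.log x - 2 * (x - 1)) (Set.Ici 1) := by
    refine monotoneOn_of_deriv_nonneg (convex_Ici 1) ?_ ?_ ?_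
    · refine ContinuousOn.sub (ContinuousOn.mul (by fun_prop) ?_) (by fun_prop)
      exact Real.continuousOn_log.mono (fun z hz => by
        simp only [Set.mem_compl_iff, Set.mem_singleton_iff]
        intro h; rw [h] at hz; simp at hz; linarith)
    · intro z hz
      rw [interior_Ici] at hz
      exact (psi_hasDeriv (by linarith [Set.mem_Ioi.mp hz])).differentiableAt.differentiableWithinAt
    · intro z hz
      rw [interior_Ici] at hz
      rw [(psi_hasDeriv (by linarith [Set.mem_Ioi.mp hz])).deriv]
      exact psi_deriv_nonneg (by linarith [Set.mem_Ioi.mp hz])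
  have := hmono (Set.mem_Ici.mpr le_rfl) (Set.mem_Ici.mpr hx) hx
  simpa using this

private lemma psi_nonpos {x : ℝ} (hx0 : 0 < x) (hx : x ≤ 1) :
    (x + 1) * Real.log x - 2 * (x - 1) ≤ 0 := by
  have hmono : MonotoneOn (fun x : ℝ => (x + 1) * Real.log x - 2 * (x - 1)) (Set.Ioc 0 1) := by
    refine monotoneOn_of_deriv_nonneg (convex_Ioc 0 1) ?_ ?_ ?_
    · refine ContinuousOn.sub (ContinuousOn.mul (by fun_prop) ?_) (by fun_prop)
      exact Real.continuousOn_log.mono (fun z hz => by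
        simp only [Set.mem_compl_iff, Set.mem_singleton_iff]
        intro h; rw [h] at hz; exact lt_irrefl 0 hz.1)
    · intro z hz
      rw [interior_Ioc] at hz
      exact (psi_hasDeriv hz.1).differentiableAt.differentiableWithinAt
    · intro z hz
      rw [interior_Ioc] at hz
      rw [(psi_hasDeriv hz.1).deriv]
      exact psi_deriv_nonneg hz.1
  have := hmono (Set.mem_Ioc.mpr ⟨hx0, hx⟩) (Set.mem_Ioc.mpr ⟨one_pos, le_rfl⟩) hx
  simpa using this

private lemma F_hasDeriv {y : ℝ} (hy : 0 < y) :
    HasDerivAt (fun x : ℝ => 2 * (x + 2) * (x * Real.log x - x + 1) - 3 * (x - 1) ^ 2)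
      (4 * ((y + 1) * Real.log y - 2 * (y - 1))) y := by
  have h1 : HasDerivAt (fun x : ℝ => x * Real.log x) (Real.log y + 1) y :=
    Real.hasDerivAt_mul_log hy.ne'
  have h2 : HasDerivAt (fun x : ℝ => x * Real.log x - x + 1) (Real.log y + 1 - 1) y := by
    simpa using (h1.sub (hasDerivAt_id y)).add_const 1
  have h3 : HasDerivAt (fun x : ℝ => 2 * (x + 2)) 2 y := by
    simpa using ((hasDerivAt_id y).add_const 2).const_mul 2
  have h4 : HasDerivAt (fun x : ℝ => 2 * (x + 2) * (x * Real.log x - x + 1))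
      (2 * (y * Real.log y - y + 1) + (2 * (y + 2)) * (Real.log y + 1 - 1)) y := h3.mul h2
  have h5 : HasDerivAt (fun x : ℝ => 3 * (x - 1) ^ 2) (3 * (2 * (y - 1))) y := by
    simpa using (((hasDerivAt_id y).sub_const 1).pow 2).const_mul 3
  have := h4.sub h5
  refine this.congr_deriv ?_
  ring

private lemma key_ineq {x : ℝ} (hx : 0 ≤ x) :
    3 * (x - 1) ^ 2 ≤ 2 * (x + 2) * (x * Real.log x - x + 1) := by
  rcases eq_or_lt_of_le hx with h0 | hx0
  · rw [← h0]; simp [Real.log_zero]; norm_num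
  set F : ℝ → ℝ := fun x => 2 * (x + 2) * (x * Real.log x - x + 1) - 3 * (x - 1) ^ 2 with hF
  have hF1 : F 1 = 0 := by simp [hF]
  have hcont : ∀ s : Set ℝ, (∀ z ∈ s, z ≠ 0) → ContinuousOn F s := by
    intro s hs
    have hlog : ContinuousOn Real.log s := Real.continuousOn_log.mono (fun z hz => hs z hz)
    exact (((by fun_prop : ContinuousOn (fun x : ℝ => 2 * (x + 2)) s)).mul
      (((continuousOn_id.mul hlog).sub continuousOn_id).add continuousOn_const)).sub (by fun_prop)
  have : 0 ≤ F x := by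
    rcases le_or_gt 1 x with h1 | h1
    · have hmono : MonotoneOn F (Set.Ici 1) := by
        refine monotoneOn_of_deriv_nonneg (convex_Ici 1) (hcont _ (fun z hz => by
          simp only [Set.mem_Ici] at hz; linarith)) ?_ ?_
        · intro z hz
          rw [interior_Ici] at hz
          exact (F_hasDeriv (by linarith [Set.mem_Ioi.mp hz])).differentiableAt.differentiableWithinAt
        · intro z hz
          rw [interior_Ici] at hz
          have hz1 : (1:ℝ) < z := Set.mem_Ioi.mp hz
          rw [(F_hasDeriv (by linarith)).deriv]
          have := psi_nonneg (le_of_lt hz1)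
          linarith
      have := hmono (Set.mem_Ici.mpr le_rfl) (Set.mem_Ici.mpr h1) h1
      rw [hF1] at this; exact this
    · have hanti : AntitoneOn F (Set.Ioc 0 1) := by
        refine antitoneOn_of_deriv_nonpos (convex_Ioc 0 1) (hcont _ (fun z hz => hz.1.ne')) ?_ ?_
        · intro z hz
          rw [interior_Ioc] at hz
          exact (F_hasDeriv hz.1).differentiableAt.differentiableWithinAt
        · intro z hz
          rw [interior_Ioc] at hz
          rw [(F_hasDeriv hz.1).deriv]
          have := psi_nonpos hz.1 (le_of_lt hz.2)
          linarith
      have := hanti (Set.mem_Ioc.mpr ⟨hx0, le_of_lt h1⟩) (Set.mem_Ioc.mpr ⟨one_pos, le_rfl⟩) (le_of_lt h1)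
      rw [hF1] at this; exact this
  simpa [hF] using this

private lemma gibbs {α : Type*} [Fintype α] (f g : α → ℝ) (hf : ∀ x, 0 ≤ f x)
    (hg : ∀ x, 0 ≤ g x) (hac : ∀ x, g x = 0 → f x = 0) (h1 : ∑ x, f x = 1)
    (h2 : ∑ x, g x ≤ 1) : 0 ≤ ∑ x, f x * Real.log (f x / g x) := by
  have key : ∀ x, f x - g x ≤ f x * Real.log (f x / g x) := by
    intro x
    rcases eq_or_lt_of_le (hf x) with h0 | hfx
    · rw [← h0]; simp; exact hg x
    · have hgx : 0 < g x := by
        rcases eq_or_lt_of_le (hg x) with h0' | h; · exact absurd (hac x h0'.symm) (by linarith)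
        exact h
      have hlog : 1 - (f x / g x)⁻¹ ≤ Real.log (f x / g x) :=
        Real.one_sub_inv_le_log_of_pos (div_pos hfx hgx)
      rw [inv_div] at hlog
      have h3 : f x * (1 - g x / f x) ≤ f x * Real.log (f x / g x) :=
        mul_le_mul_of_nonneg_left hlog (le_of_lt hfx)
      have h4 : f x * (1 - g x / f x) = f x - g x := by field_simp
      linarith
  calc (0:ℝ) = 1 - 1 := by ring
    _ ≤ ∑ x, f x - ∑ x, g x := by rw [h1]; linarith
    _ = ∑ x, (f x - g x) := (Finset.sum_sub_distrib _ _).symm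
    _ ≤ ∑ x, f x * Real.log (f x / g x) := Finset.sum_le_sum (fun x _ => key x)

private lemma pinsker {α : Type*} [Fintype α] (f g : α → ℝ) (hf : ∀ x, 0 ≤ f x)
    (hg : ∀ x, 0 ≤ g x) (hac : ∀ x, g x = 0 → f x = 0)
    (hf1 : ∑ x, f x = 1) (hg1 : ∑ x, g x = 1) :
    (∑ x, |f x - g x|) ^ 2 ≤ 2 * ∑ x, f x * Real.log (f x / g x) := by
  obtain ⟨r, hr0, hgr, hlogr⟩ : ∃ r : α → ℝ, (∀ x, 0 ≤ r x) ∧ (∀ x, g x * r x = f x) ∧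
      (∀ x, g x * (r x * Real.log (r x)) = f x * Real.log (f x / g x)) := by
    refine ⟨fun x => f x / g x, fun x => div_nonneg (hf x) (hg x), ?_, ?_⟩
    · intro x
      rcases eq_or_lt_of_le (hg x) with h0 | h
      · rw [← h0]; simp [hac x h0.symm]
      · field_simp
    · intro x
      rcases eq_or_lt_of_le (hg x) with h0 | h
      · rw [← h0]; simp [hac x h0.symm]
      · rw [← mul_assoc]
        congr 1
        field_simp
  set u : α → ℝ := fun x => Real.sqrt (g x * (r x + 2) / 3) with hu
  set v : α → ℝ := fun x => Real.sqrt (3 * g x * (r x - 1) ^ 2 / (r x + 2)) with hv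
  have hrp : ∀ x, (0:ℝ) < r x + 2 := fun x => by linarith [hr0 x]
  have hunn : ∀ x, 0 ≤ g x * (r x + 2) / 3 :=
    fun x => div_nonneg (mul_nonneg (hg x) (hrp x).le) (by norm_num)
  have hvnn : ∀ x, 0 ≤ 3 * g x * (r x - 1) ^ 2 / (r x + 2) :=
    fun x => div_nonneg (mul_nonneg (mul_nonneg (by norm_num) (hg x)) (sq_nonneg _)) (hrp x).le
  have huv : ∀ x, |f x - g x| = u x * v x := by
    intro x
    rw [hu, hv, ← Real.sqrt_mul (hunn x)]
    have harg : g x * (r x + 2) / 3 * (3 * g x * (r x - 1) ^ 2 / (r x + 2)) =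
        (g x * (r x - 1)) ^ 2 := by
      rw [div_mul_div_comm, div_eq_iff (mul_pos (by norm_num : (0:ℝ) < 3) (hrp x)).ne']
      ring
    rw [harg, Real.sqrt_sq_eq_abs]
    congr 1
    rw [mul_sub, mul_one, hgr x]
  have hu2 : ∑ x, u x ^ 2 = 1 := by
    have : ∀ x, u x ^ 2 = (f x + 2 * g x) / 3 := by
      intro x
      rw [hu, Real.sq_sqrt (hunn x)]
      rw [mul_add, hgr x]; ring
    rw [Finset.sum_congr rfl (fun x _ => this x)]
    rw [← Finset.sum_div, Finset.sum_add_distrib, hf1, ← Finset.mul_sum, hg1]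
    norm_num
  have hv2 : ∑ x, v x ^ 2 ≤ 2 * ∑ x, f x * Real.log (f x / g x) := by
    have hptwise : ∀ x, v x ^ 2 ≤ 2 * (f x * Real.log (f x / g x) - f x + g x) := by
      intro x
      rw [hv, Real.sq_sqrt (hvnn x)]
      have hkey := key_ineq (hr0 x)
      have h5 : 3 * g x * (r x - 1) ^ 2 / (r x + 2) ≤
          2 * g x * (r x * Real.log (r x) - r x + 1) := by
        rw [div_le_iff₀ (hrp x)]
        have := mul_le_mul_of_nonneg_left hkey (hg x)
        nlinarith [this]
      have h6 := hlogr x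
      have h7 := hgr x
      nlinarith [h5]
    calc ∑ x, v x ^ 2 ≤ ∑ x, 2 * (f x * Real.log (f x / g x) - f x + g x) :=
          Finset.sum_le_sum (fun x _ => hptwise x)
      _ = 2 * ∑ x, (f x * Real.log (f x / g x) - f x + g x) := by rw [← Finset.mul_sum]
      _ = 2 * (∑ x, (f x * Real.log (f x / g x) - f x) + ∑ x, g x) := by
          rw [← Finset.sum_add_distrib]
      _ = 2 * ((∑ x, f x * Real.log (f x / g x)) - ∑ x, f x + ∑ x, g x) := by
          rw [Finset.sum_sub_distrib]
      _ = 2 * ∑ x, f x * Real.log (f x / g x) := by rw [hf1, hg1]; ring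
  calc (∑ x, |f x - g x|) ^ 2 = (∑ x, u x * v x) ^ 2 := by
        rw [Finset.sum_congr rfl (fun x _ => huv x)]
    _ ≤ (∑ x, u x ^ 2) * ∑ x, v x ^ 2 := Finset.sum_mul_sq_le_sq_mul_sq _ _ _
    _ = ∑ x, v x ^ 2 := by rw [hu2, one_mul]
    _ ≤ 2 * ∑ x, f x * Real.log (f x / g x) := hv2

section Comb
variable {n : ℕ} {S : Type*} [Fintype S]

private noncomputable def marg (p : (Fin n → S) → ℝ) (j : ℕ) (hj : j ≤ n) (u : Fin j → S) : ℝ :=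
  ∑ w : Fin n → S, if ∀ a : Fin j, w (Fin.castLE hj a) = u a then p w else 0

private lemma marg_nonneg {p : (Fin n → S) → ℝ} (hpos : ∀ w, 0 ≤ p w) {j : ℕ} (hj : j ≤ n)
    (u : Fin j → S) : 0 ≤ marg p j hj u :=
  Finset.sum_nonneg (fun w _ => by
    by_cases h : ∀ a : Fin j, w (Fin.castLE hj a) = u a <;> simp [h, hpos w])

/-- summing an indicator of full agreement over all tuples -/
private lemma sum_if_tuple_eq {j : ℕ} (v : Fin j → S) (c : ℝ) :
    ∑ u : Fin j → S, (if ∀ a : Fin j, v a = u a then c else 0) = c := by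
  have h : ∀ u : Fin j → S, (∀ a : Fin j, v a = u a) ↔ u = v := by
    intro u
    constructor
    · intro h; funext a; exact (h a).symm
    · intro h a; rw [h]
  simp_rw [h]
  simp

private lemma marg_total {p : (Fin n → S) → ℝ} (hsum : ∑ w, p w = 1) {j : ℕ} (hj : j ≤ n) :
    ∑ u : Fin j → S, marg p j hj u = 1 := by
  rw [← hsum]
  unfold marg
  rw [Finset.sum_comm]
  refine Finset.sum_congr rfl (fun w _ => ?_)
  exact sum_if_tuple_eq (fun a => w (Fin.castLE hj a)) (p w)

private lemma exists_perm_comp {m N : ℕ} (ι κ : Fin m → Fin N) (hι : Function.Injective ι)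
    (hκ : Function.Injective κ) : ∃ π : Equiv.Perm (Fin N), ∀ a, π (κ a) = ι a := by
  have h1 : Fintype.card (Set.range κ) = m := by
    rw [← Fintype.card_congr (Equiv.ofInjective κ hκ), Fintype.card_fin]
  have h2 : Fintype.card (Set.range ι) = m := by
    rw [← Fintype.card_congr (Equiv.ofInjective ι hι), Fintype.card_fin]
  have hcard : Fintype.card ((Set.range κ)ᶜ : Set (Fin N)) =
      Fintype.card ((Set.range ι)ᶜ : Set (Fin N)) := by
    rw [Fintype.card_compl_set, Fintype.card_compl_set, h1, h2]
  let e1 : (Set.range κ : Set (Fin N)) ≃ (Set.range ι : Set (Fin N)) :=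
    (Equiv.ofInjective κ hκ).symm.trans (Equiv.ofInjective ι hι)
  let e2 : ((Set.range κ)ᶜ : Set (Fin N)) ≃ ((Set.range ι)ᶜ : Set (Fin N)) :=
    Fintype.equivOfCardEq hcard
  refine ⟨(Equiv.Set.sumCompl (Set.range κ)).symm.trans
    ((e1.sumCongr e2).trans (Equiv.Set.sumCompl (Set.range ι))), ?_⟩
  intro a
  simp only [Equiv.trans_apply]
  rw [Equiv.Set.sumCompl_symm_apply_of_mem (Set.mem_range_self a)]
  rw [Equiv.sumCongr_apply, Sum.map_inl]
  have he1 : e1 ⟨κ a, Set.mem_range_self a⟩ = ⟨ι a, Set.mem_range_self a⟩ := by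
    simp only [e1, Equiv.trans_apply]
    rw [Equiv.ofInjective_symm_apply]
    rfl
  rw [he1, Equiv.Set.sumCompl_apply_inl]

/-- Master symmetry lemma: the joint distribution of the variables at any injectively
chosen coordinates equals the marginal on the initial segment. -/
private lemma marg_embed {p : (Fin n → S) → ℝ}
    (hsymm : ∀ (π : Equiv.Perm (Fin n)) (w : Fin n → S), p (w ∘ π) = p w)
    {j : ℕ} (hj : j ≤ n) (ι : Fin j → Fin n) (hι : Function.Injective ι) (u : Fin j → S) :
    (∑ w : Fin n → S, if ∀ a : Fin j, w (ι a) = u a then p w else 0) = marg p j hj u := by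
  obtain ⟨π, hπ⟩ := exists_perm_comp ι (Fin.castLE hj) hι (Fin.castLE_injective hj)
  unfold marg
  refine Fintype.sum_equiv (Equiv.arrowCongr π.symm (Equiv.refl S)) _ _ ?_
  intro w
  have he : (Equiv.arrowCongr π.symm (Equiv.refl S)) w = w ∘ π := by
    funext i; simp [Equiv.arrowCongr]
  rw [he]
  have hcond : (∀ a, (w ∘ π) (Fin.castLE hj a) = u a) ↔ ∀ a, w (ι a) = u a := by
    apply forall_congr'
    intro a
    rw [Function.comp_apply, hπ a]
  rw [hsymm π w]
  exact (if_congr hcond rfl rfl).symm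

private lemma forall_add_iff {a b : ℕ} {P : Fin (a + b) → Prop} :
    (∀ i : Fin (a + b), P i) ↔ (∀ i : Fin a, P (Fin.castAdd b i)) ∧
      (∀ i : Fin b, P (Fin.natAdd a i)) := by
  constructor
  · exact fun h => ⟨fun i => h _, fun i => h _⟩
  · rintro ⟨h1, h2⟩ i
    refine Fin.addCases (fun i => h1 i) (fun i => h2 i) i

/-- marginalizing out the second block (no symmetry needed) -/
private lemma sum_append_right {p : (Fin n → S) → ℝ} {a b : ℕ} (hab : a + b ≤ n)
    (ha : a ≤ n) (u : Fin a → S) :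
    ∑ v : Fin b → S, marg p (a + b) hab (Fin.append u v) = marg p a ha u := by
  unfold marg
  rw [Finset.sum_comm]
  refine Finset.sum_congr rfl (fun w _ => ?_)
  have hsplit : ∀ v : Fin b → S,
      (∀ i : Fin (a + b), w (Fin.castLE hab i) = Fin.append u v i) ↔
      ((∀ i : Fin a, w (Fin.castLE ha i) = u i) ∧
       (∀ i : Fin b, w (Fin.castLE hab (Fin.natAdd a i)) = v i)) := by
    intro v
    rw [forall_add_iff]
    constructor
    · rintro ⟨h1, h2⟩
      constructor
      · intro i
        have := h1 i
        rwa [Fin.append_left, show Fin.castLE hab (Fin.castAdd b i) = Fin.castLE ha i from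
          Fin.ext (by simp)] at this
      · intro i
        have := h2 i
        rwa [Fin.append_right] at this
    · rintro ⟨h1, h2⟩
      constructor
      · intro i
        rw [Fin.append_left, show Fin.castLE hab (Fin.castAdd b i) = Fin.castLE ha i from
          Fin.ext (by simp)]
        exact h1 i
      · intro i
        rw [Fin.append_right]
        exact h2 i
  simp_rw [hsplit, ite_and]
  by_cases hC : ∀ i : Fin a, w (Fin.castLE ha i) = u i
  · simp only [if_pos hC]
    exact sum_if_tuple_eq (fun i => w (Fin.castLE hab (Fin.natAdd a i))) (p w)
  · simp [hC]

/-- swapping the two blocks (uses symmetry) -/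
private lemma marg_append_swap {p : (Fin n → S) → ℝ}
    (hsymm : ∀ (π : Equiv.Perm (Fin n)) (w : Fin n → S), p (w ∘ π) = p w)
    {a b : ℕ} (hab : a + b ≤ n) (hba : b + a ≤ n) (u : Fin a → S) (v : Fin b → S) :
    marg p (a + b) hab (Fin.append u v) = marg p (b + a) hba (Fin.append v u) := by
  have hι : Function.Injective
      (fun i : Fin (b + a) => Fin.castLE hab (finAddFlip i)) :=
    (Fin.castLE_injective hab).comp (Equiv.injective _)
  rw [← marg_embed hsymm hba _ hι (Fin.append v u)]
  unfold marg
  refine Finset.sum_congr rfl (fun w _ => ?_)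
  refine if_congr ?_ rfl rfl
  rw [forall_add_iff (a := a) (b := b), forall_add_iff (a := b) (b := a)]
  constructor
  · rintro ⟨h1, h2⟩
    constructor
    · intro i
      simpa [finAddFlip_apply_castAdd, Fin.append_left] using h2 i
    · intro i
      simpa [finAddFlip_apply_natAdd, Fin.append_right] using h1 i
  · rintro ⟨h1, h2⟩
    constructor
    · intro i
      simpa [finAddFlip_apply_natAdd, Fin.append_left] using h2 i
    · intro i
      simpa [finAddFlip_apply_castAdd, Fin.append_right] using h1 i

/-- marginalizing out the first block -/
private lemma sum_append_left {p : (Fin n → S) → ℝ}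
    (hsymm : ∀ (π : Equiv.Perm (Fin n)) (w : Fin n → S), p (w ∘ π) = p w)
    {a b : ℕ} (hab : a + b ≤ n) (hb : b ≤ n) (v : Fin b → S) :
    ∑ u : Fin a → S, marg p (a + b) hab (Fin.append u v) = marg p b hb v := by
  have hba : b + a ≤ n := by omega
  calc ∑ u : Fin a → S, marg p (a + b) hab (Fin.append u v)
      = ∑ u : Fin a → S, marg p (b + a) hba (Fin.append v u) :=
        Finset.sum_congr rfl (fun u _ => marg_append_swap hsymm hab hba u v)
    _ = marg p b hb v := sum_append_right hba hb v


/-- The joint distribution of the block `X_{k+1..k+t}` together with a single variable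
`X_a` (`a < k`), obtained by summing the fibers of the joint of `X_{1..k}, X_{k+1..k+t}`. -/
private lemma sum_fiber {p : (Fin n → S) → ℝ}
    (hsymm : ∀ (π : Equiv.Perm (Fin n)) (w : Fin n → S), p (w ∘ π) = p w)
    {k t : ℕ} (hkt : k + t ≤ n) (ht1 : t + 1 ≤ n) (a : Fin k) (s : S) (r : Fin t → S) :
    ∑ y : Fin k → S, (if y a = s then marg p (k + t) hkt (Fin.append y r) else 0)
      = marg p (t + 1) ht1 (Fin.append r (fun _ => s)) := by
  set ι : Fin (t + 1) → Fin n := fun i =>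
    Fin.addCases (fun i' : Fin t => Fin.castLE hkt (Fin.natAdd k i'))
      (fun _ : Fin 1 => Fin.castLE hkt (Fin.castAdd t a)) i with hι
  have hinj : Function.Injective ι := by
    intro x y h
    induction x using Fin.addCases with
    | left i =>
      induction y using Fin.addCases with
      | left i' =>
        simp only [hι, Fin.addCases_left] at h
        have hv := congrArg Fin.val h
        simp only [Fin.coe_castLE, Fin.coe_natAdd] at hv
        have : i = i' := Fin.ext (by omega)
        rw [this]
      | right i' =>
        simp only [hι, Fin.addCases_left, Fin.addCases_right] at h
        have hv := congrArg Fin.val h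
        simp only [Fin.coe_castLE, Fin.coe_natAdd, Fin.coe_castAdd] at hv
        have := a.isLt
        omega
    | right i =>
      induction y using Fin.addCases with
      | left i' =>
        simp only [hι, Fin.addCases_left, Fin.addCases_right] at h
        have hv := congrArg Fin.val h
        simp only [Fin.coe_castLE, Fin.coe_natAdd, Fin.coe_castAdd] at hv
        have := a.isLt
        omega
      | right i' =>
        congr 1
        exact Subsingleton.elim i i'
  rw [← marg_embed hsymm ht1 ι hinj]
  have pull : ∀ (c : Prop) (F : (Fin n → S) → ℝ),
      (if c then ∑ w : Fin n → S, F w else 0) = ∑ w : Fin n → S, if c then F w else 0 := by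
    intro c F
    split_ifs <;> simp
  have expand : ∀ y : Fin k → S,
      (if y a = s then marg p (k + t) hkt (Fin.append y r) else 0) =
      ∑ w : Fin n → S, if y a = s then
        (if ∀ i : Fin (k + t), w (Fin.castLE hkt i) = Fin.append y r i then p w else 0)
        else 0 := by
    intro y
    rw [marg, pull]
  rw [Finset.sum_congr rfl (fun y _ => expand y), Finset.sum_comm]
  refine Finset.sum_congr rfl (fun w _ => ?_)
  set y₀ : Fin k → S := fun i => w (Fin.castLE hkt (Fin.castAdd t i)) with hy₀
  rw [Finset.sum_eq_single y₀]
  rotate_left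
  · intro y _ hy
    have hnc : ¬ ∀ i : Fin (k + t), w (Fin.castLE hkt i) = Fin.append y r i := by
      intro hall
      apply hy
      funext i
      have := hall (Fin.castAdd t i)
      rw [Fin.append_left] at this
      exact this.symm
    by_cases h : y a = s <;> simp [h, hnc]
  · intro h
    exact absurd (Finset.mem_univ y₀) h
  have hcond1 : (∀ i : Fin (k + t), w (Fin.castLE hkt i) = Fin.append y₀ r i) ↔
      (∀ i : Fin t, w (Fin.castLE hkt (Fin.natAdd k i)) = r i) := by
    rw [forall_add_iff]
    simp [Fin.append_left, Fin.append_right, hy₀]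
  have hcond2 : (∀ i : Fin (t + 1), w (ι i) = Fin.append r (fun _ : Fin 1 => s) i) ↔
      ((∀ i : Fin t, w (Fin.castLE hkt (Fin.natAdd k i)) = r i) ∧
        w (Fin.castLE hkt (Fin.castAdd t a)) = s) := by
    rw [forall_add_iff]
    simp [hι, Fin.append_left, Fin.append_right, Fin.addCases_left, Fin.addCases_right,
      Fin.forall_fin_one]
  simp only [hcond1, hcond2]
  by_cases h2 : ∀ i : Fin t, w (Fin.castLE hkt (Fin.natAdd k i)) = r i <;>
    by_cases hs : y₀ a = s <;> simp [h2, hs, hy₀] at * <;> simp [h2, hs]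


/-- reindexing a sum over `Fin 1 → S` -/
private lemma sum_one {β : Type*} [AddCommMonoid β] (g : (Fin 1 → S) → β) :
    ∑ v : Fin 1 → S, g v = ∑ s : S, g (fun _ => s) := by
  refine (Fintype.sum_equiv (Equiv.funUnique (Fin 1) S).symm _ _ ?_).symm
  intro s
  rfl

/-- reindexing a sum over `Fin (a+b) → S` as a double sum over blocks -/
private lemma sum_append_all {a b : ℕ} {β : Type*} [AddCommMonoid β]
    (f : (Fin (a + b) → S) → β) :
    ∑ z : Fin (a + b) → S, f z = ∑ u : Fin a → S, ∑ v : Fin b → S, f (Fin.append u v) := by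
  have hbij : Function.Bijective (fun uv : (Fin a → S) × (Fin b → S) =>
      Fin.append uv.1 uv.2) := by
    constructor
    · intro x y h
      have h1 : x.1 = y.1 := by
        funext i
        have := congrFun h (Fin.castAdd b i)
        simp only [] at this
        rwa [Fin.append_left, Fin.append_left] at this
      have h2 : x.2 = y.2 := by
        funext i
        have := congrFun h (Fin.natAdd a i)
        simp only [] at this
        rwa [Fin.append_right, Fin.append_right] at this
      exact Prod.ext h1 h2
    · intro z
      refine ⟨(z ∘ Fin.castAdd b, z ∘ Fin.natAdd a), ?_⟩
      funext i
      refine Fin.addCases (fun i => ?_) (fun i => ?_) i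
      · show Fin.append _ _ (Fin.castAdd b i) = _
        rw [Fin.append_left]; rfl
      · show Fin.append _ _ (Fin.natAdd a i) = _
        rw [Fin.append_right]; rfl
  calc ∑ z : Fin (a + b) → S, f z
      = ∑ uv : (Fin a → S) × (Fin b → S), f (Fin.append uv.1 uv.2) :=
        (Fintype.sum_equiv (Equiv.ofBijective _ hbij) _ _ (fun uv => rfl)).symm
    _ = ∑ u : Fin a → S, ∑ v : Fin b → S, f (Fin.append u v) := Fintype.sum_prod_type _

/-- (signed) negative entropy of the marginal on the first `j` coordinates -/
private noncomputable def entL (p : (Fin n → S) → ℝ) : ℕ → ℝ := fun j =>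
  if hj : j ≤ n then ∑ u : Fin j → S, marg p j hj u * Real.log (marg p j hj u) else 0

private lemma entL_eq (p : (Fin n → S) → ℝ) {j : ℕ} (hj : j ≤ n) :
    entL p j = ∑ u : Fin j → S, marg p j hj u * Real.log (marg p j hj u) := by
  unfold entL
  rw [dif_pos hj]

/-- summing over a pair (block of length t, single letter) -/
private lemma entL_succ_eq (p : (Fin n → S) → ℝ) {t : ℕ} (ht1 : t + 1 ≤ n) :
    entL p (t + 1) = ∑ u : Fin t → S, ∑ s : S,
      marg p (t + 1) ht1 (Fin.append u (fun _ => s)) *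
        Real.log (marg p (t + 1) ht1 (Fin.append u (fun _ => s))) := by
  rw [entL_eq p ht1, sum_append_all]
  exact Finset.sum_congr rfl (fun u _ => sum_one
    (fun v => marg p (t + 1) ht1 (Fin.append u v) * Real.log (marg p (t + 1) ht1 (Fin.append u v))))

private lemma marg_succ_sum {p : (Fin n → S) → ℝ} {t : ℕ} (ht1 : t + 1 ≤ n) (ht : t ≤ n)
    (u : Fin t → S) :
    ∑ s : S, marg p (t + 1) ht1 (Fin.append u (fun _ => s)) = marg p t ht u := by
  rw [← sum_append_right ht1 ht u]
  exact (sum_one (fun v => marg p (t + 1) ht1 (Fin.append u v))).symm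

private lemma single_le_sum' {α : Type*} [Fintype α] {f : α → ℝ} (hf : ∀ x, 0 ≤ f x) (x : α) :
    f x ≤ ∑ y, f y :=
  Finset.single_le_sum (fun y _ => hf y) (Finset.mem_univ x)

/-- entropy is monotone: `H_{t+1} ≥ H_t`, i.e. `entL (t+1) ≤ entL t`. -/
private lemma entL_succ_le {p : (Fin n → S) → ℝ} (hpos : ∀ w, 0 ≤ p w) {t : ℕ}
    (ht1 : t + 1 ≤ n) : entL p (t + 1) ≤ entL p t := by
  have ht : t ≤ n := by omega
  rw [entL_succ_eq p ht1, entL_eq p ht]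
  refine Finset.sum_le_sum (fun u _ => ?_)
  set M : S → ℝ := fun s => marg p (t + 1) ht1 (Fin.append u (fun _ => s)) with hM
  have hM0 : ∀ s, 0 ≤ M s := fun s => marg_nonneg hpos _ _
  have hMsum : ∑ s, M s = marg p t ht u := marg_succ_sum ht1 ht u
  rw [← hMsum]
  calc ∑ s, M s * Real.log (M s) ≤ ∑ s, M s * Real.log (∑ s', M s') := by
        refine Finset.sum_le_sum (fun s _ => ?_)
        rcases eq_or_lt_of_le (hM0 s) with h0 | hpos'
        · rw [← h0]; simp
        · exact mul_le_mul_of_nonneg_left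
            (Real.log_le_log hpos' (single_le_sum' hM0 s)) (hM0 s)
    _ = (∑ s, M s) * Real.log (∑ s, M s) := by rw [← Finset.sum_mul]

/-- conditional entropy of one more letter is at most `log |S|`. -/
private lemma entL_succ_ge {p : (Fin n → S) → ℝ} (hpos : ∀ w, 0 ≤ p w)
    (hsum : ∑ w, p w = 1) {t : ℕ} (ht1 : t + 1 ≤ n) (hcard : 0 < Fintype.card S) :
    entL p t - entL p (t + 1) ≤ Real.log (Fintype.card S) := by
  have ht : t ≤ n := by omega
  -- apply Gibbs with f = joint, g = (marginal) × uniform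
  set M : (Fin t → S) × S → ℝ := fun us =>
    marg p (t + 1) ht1 (Fin.append us.1 (fun _ => us.2)) with hMdef
  set g : (Fin t → S) × S → ℝ := fun us => marg p t ht us.1 / Fintype.card S with hgdef
  have hM0 : ∀ x, 0 ≤ M x := fun x => marg_nonneg hpos _ _
  have hP0 : ∀ u, 0 ≤ marg p t ht u := fun u => marg_nonneg hpos ht u
  have hMsum : ∀ u, ∑ s, M (u, s) = marg p t ht u := fun u => marg_succ_sum ht1 ht u
  have hg0 : ∀ x, 0 ≤ g x := fun x => div_nonneg (hP0 _) (Nat.cast_nonneg _)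
  have hMle : ∀ u s, M (u, s) ≤ marg p t ht u := by
    intro u s
    rw [← hMsum u]
    exact single_le_sum' (fun s' => hM0 (u, s')) s
  have hcard' : (0:ℝ) < Fintype.card S := by exact_mod_cast hcard
  have hac : ∀ x, g x = 0 → M x = 0 := by
    rintro ⟨u, s⟩ hx
    simp only [hgdef] at hx
    rcases div_eq_zero_iff.mp hx with h | h
    · have h1 := hMle u s
      have h2 := hM0 (u, s)
      rw [h] at h1
      linarith
    · exact absurd h hcard'.ne'
  have hM1 : ∑ x : (Fin t → S) × S, M x = 1 := by
    rw [Fintype.sum_prod_type]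
    simp_rw [hMsum]
    exact marg_total hsum ht
  have hg1 : ∑ x : (Fin t → S) × S, g x ≤ 1 := by
    rw [Fintype.sum_prod_type]
    have hrow : ∀ u : Fin t → S, ∑ s : S, g (u, s) = marg p t ht u := by
      intro u
      simp only [hgdef]
      rw [Finset.sum_const, Finset.card_univ, nsmul_eq_mul]
      field_simp
    rw [Finset.sum_congr rfl (fun u _ => hrow u), marg_total hsum ht]
  have hgibbs := gibbs M g hM0 hg0 hac hM1 hg1
  have hsplit : ∀ x : (Fin t → S) × S, M x * Real.log (M x / g x) =
      M x * Real.log (M x) - M x * Real.log (marg p t ht x.1)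
        + M x * Real.log (Fintype.card S) := by
    rintro ⟨u, s⟩
    rcases eq_or_lt_of_le (hM0 (u, s)) with h0 | hMpos
    · rw [← h0]; ring
    · have hPpos : 0 < marg p t ht u := lt_of_lt_of_le hMpos (hMle u s)
      have hgval : g (u, s) = marg p t ht u / Fintype.card S := rfl
      rw [hgval, Real.log_div hMpos.ne' (by positivity),
        Real.log_div hPpos.ne' hcard'.ne']
      ring
  rw [Finset.sum_congr rfl (fun x _ => hsplit x)] at hgibbs
  rw [Finset.sum_add_distrib, Finset.sum_sub_distrib] at hgibbs
  have e1 : ∑ x : (Fin t → S) × S, M x * Real.log (M x) = entL p (t + 1) := by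
    rw [entL_succ_eq p ht1, Fintype.sum_prod_type]
  have e2 : ∑ x : (Fin t → S) × S, M x * Real.log (marg p t ht x.1) = entL p t := by
    rw [Fintype.sum_prod_type, entL_eq p ht]
    refine Finset.sum_congr rfl (fun u _ => ?_)
    have h := Finset.sum_mul Finset.univ (fun s => M (u, s)) (Real.log (marg p t ht u))
    rw [hMsum u] at h
    exact h.symm
  have e3 : ∑ x : (Fin t → S) × S, M x * Real.log (Fintype.card S) =
      Real.log (Fintype.card S) := by
    have h := Finset.sum_mul Finset.univ M (Real.log (Fintype.card S))
    rw [hM1, one_mul] at h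
    exact h.symm
  rw [e1, e2, e3] at hgibbs
  linarith


/-- Core bound: conditioning on a block of `t` further coordinates, the marginal on the
first `k` coordinates is close to a mixture of product distributions, with squared L1
distance controlled by entropy differences. -/
private lemma block_l1_bound {p : (Fin n → S) → ℝ} (hpos : ∀ w, 0 ≤ p w)
    (hsum : ∑ w, p w = 1)
    (hsymm : ∀ (π : Equiv.Perm (Fin n)) (w : Fin n → S), p (w ∘ π) = p w)
    {k t : ℕ} (hkt : k + t ≤ n) (ht1 : t + 1 ≤ n) (hcard : 0 < Fintype.card S)
    (hk : k ≤ n) (ht : t ≤ n) :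
    ∃ q : (Fin t → S) → S → ℝ,
      (∀ r, (∀ s, 0 ≤ q r s) ∧ ∑ s, q r s = 1) ∧
      (∑ y : Fin k → S, |marg p k hk y -
          ∑ r : Fin t → S, marg p t ht r * ∏ a : Fin k, q r (y a)|) ^ 2 ≤
        2 * (entL p (k + t) + ((k:ℝ) - 1) * entL p t - (k:ℝ) * entL p (t + 1)) := by
  set P : (Fin t → S) → ℝ := fun r => marg p t ht r with hPdef
  set J : (Fin k → S) → (Fin t → S) → ℝ := fun y r => marg p (k + t) hkt (Fin.append y r)
    with hJdef
  set G : (Fin t → S) → S → ℝ := fun r s => marg p (t + 1) ht1 (Fin.append r (fun _ => s))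
    with hGdef
  set q : (Fin t → S) → S → ℝ := fun r s =>
    if P r = 0 then (Fintype.card S : ℝ)⁻¹ else G r s / P r with hqdef
  have hcard' : (0:ℝ) < Fintype.card S := by exact_mod_cast hcard
  have hP0 : ∀ r, 0 ≤ P r := fun r => marg_nonneg hpos ht r
  have hJ0 : ∀ y r, 0 ≤ J y r := fun y r => marg_nonneg hpos hkt _
  have hG0 : ∀ r s, 0 ≤ G r s := fun r s => marg_nonneg hpos ht1 _
  have hJP : ∀ r, ∑ y, J y r = P r := fun r => sum_append_left hsymm hkt ht r
  have hGP : ∀ r, ∑ s, G r s = P r := fun r => marg_succ_sum ht1 ht r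
  have hfiber : ∀ (r : Fin t → S) (a : Fin k) (s : S),
      ∑ y : Fin k → S, (if y a = s then J y r else 0) = G r s :=
    fun r a s => sum_fiber hsymm hkt ht1 a s r
  have hJleG : ∀ (y : Fin k → S) (r : Fin t → S) (a : Fin k), J y r ≤ G r (y a) := by
    intro y r a
    rw [← hfiber r a (y a)]
    have := single_le_sum' (f := fun y' : Fin k → S => if y' a = y a then J y' r else 0)
      (fun y' => by by_cases h : y' a = y a <;> simp [h, hJ0 y' r]) y
    simpa using this
  have hJleP : ∀ y r, J y r ≤ P r := by
    intro y r
    rw [← hJP r]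
    exact single_le_sum' (fun y' => hJ0 y' r) y
  have hq0 : ∀ r s, 0 ≤ q r s := by
    intro r s
    rw [hqdef]
    dsimp only
    split_ifs
    · positivity
    · exact div_nonneg (hG0 r s) (hP0 r)
  have hq1 : ∀ r, ∑ s, q r s = 1 := by
    intro r
    rcases eq_or_ne (P r) 0 with h0 | h0
    · simp only [hqdef, h0, if_true, Finset.sum_const, Finset.card_univ, nsmul_eq_mul]
      field_simp
    · simp only [hqdef, h0, if_false]
      rw [← Finset.sum_div, hGP r, div_self h0]
  have hqG : ∀ r s, P r ≠ 0 → q r s = G r s / P r := by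
    intro r s h
    simp only [hqdef, h, if_false]
  -- the conditional KL divergences
  set D : (Fin t → S) → ℝ := fun r =>
    ∑ y : Fin k → S, (J y r / P r) * Real.log ((J y r / P r) / ∏ a : Fin k, q r (y a))
    with hDdef
  -- Pinsker, conditionally on r
  have hpins : ∀ r, P r ≠ 0 →
      (∑ y : Fin k → S, |J y r / P r - ∏ a : Fin k, q r (y a)|) ^ 2 ≤ 2 * D r := by
    intro r hPr
    have hPrpos : 0 < P r := lt_of_le_of_ne (hP0 r) (Ne.symm hPr)
    refine pinsker (fun y => J y r / P r) (fun y => ∏ a : Fin k, q r (y a))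
      (fun y => div_nonneg (hJ0 y r) (hP0 r))
      (fun y => Finset.prod_nonneg (fun a _ => hq0 r (y a))) ?_ ?_ ?_
    · intro y hy
      obtain ⟨a, _, ha⟩ := Finset.prod_eq_zero_iff.mp hy
      rw [hqG r (y a) hPr] at ha
      have hGz : G r (y a) = 0 := by
        rcases div_eq_zero_iff.mp ha with h | h
        · exact h
        · exact absurd h hPr
      have h1 := hJleG y r a
      rw [hGz] at h1
      have h2 := hJ0 y r
      have h3 : J y r = 0 := le_antisymm h1 h2
      show J y r / P r = 0
      rw [h3, zero_div]
    · rw [← Finset.sum_div, hJP r, div_self hPr]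
    · rw [← Fintype.prod_sum (f := fun (_ : Fin k) (s : S) => q r s)]
      rw [Finset.prod_congr rfl (fun a _ => hq1 r)]
      simp
  -- pointwise expansion of P r * (density * log-ratio)
  have hpoint : ∀ (r : Fin t → S) (y : Fin k → S),
      P r * ((J y r / P r) * Real.log ((J y r / P r) / ∏ a : Fin k, q r (y a))) =
      J y r * Real.log (J y r) - J y r * Real.log (P r)
        - ∑ a : Fin k, J y r * Real.log (q r (y a)) := by
    intro r y
    rcases eq_or_lt_of_le (hJ0 y r) with h0 | hJpos
    · rw [← h0]
      simp
    · have hPpos : 0 < P r := lt_of_lt_of_le hJpos (hJleP y r)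
      have hqpos : ∀ a : Fin k, 0 < q r (y a) := by
        intro a
        rw [hqG r (y a) hPpos.ne']
        exact div_pos (lt_of_lt_of_le hJpos (hJleG y r a)) hPpos
      have hprodpos : 0 < ∏ a : Fin k, q r (y a) := Finset.prod_pos (fun a _ => hqpos a)
      have hdivpos : 0 < J y r / P r := div_pos hJpos hPpos
      rw [Real.log_div hdivpos.ne' hprodpos.ne', Real.log_div hJpos.ne' hPpos.ne',
        Real.log_prod (fun a _ => (hqpos a).ne')]
      field_simp
      ring_nf
      rw [Finset.mul_sum]
  -- the entropy identity for the average divergence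
  have hGleP : ∀ r s, G r s ≤ P r := by
    intro r s
    rw [← hGP r]
    exact single_le_sum' (fun s' => hG0 r s') s
  have hGlnq : ∀ r s, G r s * Real.log (q r s) =
      G r s * Real.log (G r s) - G r s * Real.log (P r) := by
    intro r s
    rcases eq_or_ne (P r) 0 with hP | hP
    · have : G r s = 0 := le_antisymm (hP ▸ hGleP r s) (hG0 r s)
      rw [this]
      ring
    · rw [hqG r s hP]
      rcases eq_or_lt_of_le (hG0 r s) with hG | hG
      · rw [← hG]; ring
      · rw [Real.log_div hG.ne' hP]
        ring
  have hregroup : ∀ (r : Fin t → S) (a : Fin k),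
      ∑ y : Fin k → S, J y r * Real.log (q r (y a)) =
      ∑ s : S, G r s * Real.log (q r s) := by
    intro r a
    have step1 : ∀ y : Fin k → S, J y r * Real.log (q r (y a)) =
        ∑ s : S, (if y a = s then J y r else 0) * Real.log (q r s) := by
      intro y
      have : ∀ s : S, (if y a = s then J y r else 0) * Real.log (q r s) =
          (if y a = s then J y r * Real.log (q r s) else 0) := by
        intro s
        split_ifs <;> simp
      rw [Finset.sum_congr rfl (fun s _ => this s)]
      simp
    rw [Finset.sum_congr rfl (fun y _ => step1 y), Finset.sum_comm]
    refine Finset.sum_congr rfl (fun s _ => ?_)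
    rw [← Finset.sum_mul, hfiber r a s]
  have hE : ∑ r : Fin t → S, P r * D r =
      entL p (k + t) + ((k:ℝ) - 1) * entL p t - (k:ℝ) * entL p (t + 1) := by
    have hPD : ∀ r, P r * D r =
        (∑ y : Fin k → S, J y r * Real.log (J y r))
        - (∑ y : Fin k → S, J y r) * Real.log (P r)
        - ∑ a : Fin k, ∑ s : S, G r s * Real.log (q r s) := by
      intro r
      rw [hDdef]
      dsimp only
      rw [Finset.mul_sum, Finset.sum_congr rfl (fun y _ => hpoint r y)]
      rw [Finset.sum_sub_distrib, Finset.sum_sub_distrib, Finset.sum_mul]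
      congr 1
      rw [Finset.sum_comm]
      refine Finset.sum_congr rfl (fun a _ => hregroup r a)
    rw [Finset.sum_congr rfl (fun r _ => hPD r)]
    rw [Finset.sum_sub_distrib, Finset.sum_sub_distrib]
    have T1 : ∑ r : Fin t → S, ∑ y : Fin k → S, J y r * Real.log (J y r) =
        entL p (k + t) := by
      rw [entL_eq p hkt, sum_append_all (a := k) (b := t)
        (f := fun z => marg p (k + t) hkt z * Real.log (marg p (k + t) hkt z)),
        Finset.sum_comm]
    have T2 : ∑ r : Fin t → S, (∑ y : Fin k → S, J y r) * Real.log (P r) = entL p t := by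
      rw [entL_eq p ht]
      exact Finset.sum_congr rfl (fun r _ => by rw [hJP r])
    have T3 : ∑ r : Fin t → S, ∑ a : Fin k, ∑ s : S, G r s * Real.log (q r s) =
        (k:ℝ) * (entL p (t + 1) - entL p t) := by
      have hrow : ∀ r : Fin t → S, ∑ a : Fin k, ∑ s : S, G r s * Real.log (q r s) =
          (k:ℝ) * ∑ s : S, G r s * Real.log (q r s) := by
        intro r
        rw [Finset.sum_const, Finset.card_univ, Fintype.card_fin, nsmul_eq_mul]
      rw [Finset.sum_congr rfl (fun r _ => hrow r), ← Finset.mul_sum]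
      congr 1
      rw [Finset.sum_congr rfl (fun r _ =>
        Finset.sum_congr rfl (fun s _ => hGlnq r s))]
      have e1 : ∑ r : Fin t → S, ∑ s : S,
          (G r s * Real.log (G r s) - G r s * Real.log (P r)) =
          (∑ r : Fin t → S, ∑ s : S, G r s * Real.log (G r s))
          - ∑ r : Fin t → S, (∑ s : S, G r s) * Real.log (P r) := by
        rw [← Finset.sum_sub_distrib]
        refine Finset.sum_congr rfl (fun r _ => ?_)
        rw [Finset.sum_mul, ← Finset.sum_sub_distrib]
      rw [e1]
      have e2 : ∑ r : Fin t → S, ∑ s : S, G r s * Real.log (G r s) = entL p (t + 1) :=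
        (entL_succ_eq p ht1).symm
      have e3 : ∑ r : Fin t → S, (∑ s : S, G r s) * Real.log (P r) = entL p t := by
        rw [entL_eq p ht]
        exact Finset.sum_congr rfl (fun r _ => by rw [hGP r])
      rw [e2, e3]
    rw [T1, T2, T3]
    ring
  -- final assembly via Cauchy-Schwarz
  refine ⟨q, fun r => ⟨hq0 r, hq1 r⟩, ?_⟩
  set B : (Fin t → S) → ℝ := fun r =>
    ∑ y : Fin k → S, |J y r / P r - ∏ a : Fin k, q r (y a)| with hBdef
  have hB0 : ∀ r, 0 ≤ B r := fun r => Finset.sum_nonneg (fun y _ => abs_nonneg _)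
  have hA : ∀ r, ∑ y : Fin k → S, |J y r - P r * ∏ a : Fin k, q r (y a)| = P r * B r := by
    intro r
    rcases eq_or_ne (P r) 0 with hP | hP
    · have hJz : ∀ y, J y r = 0 := fun y => le_antisymm (hP ▸ hJleP y r) (hJ0 y r)
      rw [hP, zero_mul]
      refine Finset.sum_eq_zero (fun y _ => ?_)
      rw [hJz y, zero_mul, sub_zero, abs_zero]
    · rw [hBdef]
      dsimp only
      rw [Finset.mul_sum]
      refine Finset.sum_congr rfl (fun y _ => ?_)
      have hPpos : 0 < P r := lt_of_le_of_ne (hP0 r) (Ne.symm hP)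
      have hrw : J y r - P r * ∏ a : Fin k, q r (y a) =
          P r * (J y r / P r - ∏ a : Fin k, q r (y a)) := by
        rw [mul_sub, mul_comm (P r) (J y r / P r), div_mul_cancel₀ _ hP]
      rw [hrw, abs_mul, abs_of_pos hPpos]
  have hZA : ∑ y : Fin k → S, |marg p k hk y -
      ∑ r : Fin t → S, P r * ∏ a : Fin k, q r (y a)| ≤
      ∑ r : Fin t → S, P r * B r := by
    calc ∑ y : Fin k → S, |marg p k hk y - ∑ r : Fin t → S, P r * ∏ a : Fin k, q r (y a)|
        = ∑ y : Fin k → S, |∑ r : Fin t → S,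
            (J y r - P r * ∏ a : Fin k, q r (y a))| := by
          refine Finset.sum_congr rfl (fun y _ => ?_)
          rw [Finset.sum_sub_distrib]
          congr 2
          exact (sum_append_right hkt hk y).symm
      _ ≤ ∑ y : Fin k → S, ∑ r : Fin t → S,
            |J y r - P r * ∏ a : Fin k, q r (y a)| :=
          Finset.sum_le_sum (fun y _ => Finset.abs_sum_le_sum_abs _ _)
      _ = ∑ r : Fin t → S, ∑ y : Fin k → S,
            |J y r - P r * ∏ a : Fin k, q r (y a)| := Finset.sum_comm
      _ = ∑ r : Fin t → S, P r * B r :=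
          Finset.sum_congr rfl (fun r _ => hA r)
  have hPsum : ∑ r : Fin t → S, P r = 1 := marg_total hsum ht
  have hCS : (∑ r : Fin t → S, P r * B r) ^ 2 ≤ ∑ r : Fin t → S, P r * B r ^ 2 := by
    have := Finset.sum_mul_sq_le_sq_mul_sq Finset.univ
      (fun r : Fin t → S => Real.sqrt (P r)) (fun r => Real.sqrt (P r) * B r)
    have heq : ∀ r : Fin t → S, Real.sqrt (P r) * (Real.sqrt (P r) * B r) = P r * B r := by
      intro r
      rw [← mul_assoc, Real.mul_self_sqrt (hP0 r)]
    have hsq1 : ∀ r : Fin t → S, Real.sqrt (P r) ^ 2 = P r :=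
      fun r => Real.sq_sqrt (hP0 r)
    have hsq2 : ∀ r : Fin t → S, (Real.sqrt (P r) * B r) ^ 2 = P r * B r ^ 2 := by
      intro r
      rw [mul_pow, Real.sq_sqrt (hP0 r)]
    rw [Finset.sum_congr rfl (fun r _ => heq r), Finset.sum_congr rfl (fun r _ => hsq1 r),
      Finset.sum_congr rfl (fun r _ => hsq2 r), hPsum, one_mul] at this
    exact this
  have hPB2 : ∑ r : Fin t → S, P r * B r ^ 2 ≤ 2 * ∑ r : Fin t → S, P r * D r := by
    rw [Finset.mul_sum]
    refine Finset.sum_le_sum (fun r _ => ?_)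
    rcases eq_or_ne (P r) 0 with hP | hP
    · rw [hP]
      ring_nf
      rfl
    · have hPpos : 0 < P r := lt_of_le_of_ne (hP0 r) (Ne.symm hP)
      calc P r * B r ^ 2 ≤ P r * (2 * D r) :=
            mul_le_mul_of_nonneg_left (hpins r hP) (hP0 r)
        _ = 2 * (P r * D r) := by ring
  have hZ0 : 0 ≤ ∑ y : Fin k → S, |marg p k hk y -
      ∑ r : Fin t → S, P r * ∏ a : Fin k, q r (y a)| :=
    Finset.sum_nonneg (fun y _ => abs_nonneg _)
  calc (∑ y : Fin k → S, |marg p k hk y -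
        ∑ r : Fin t → S, P r * ∏ a : Fin k, q r (y a)|) ^ 2
      ≤ (∑ r : Fin t → S, P r * B r) ^ 2 := pow_le_pow_left₀ hZ0 hZA 2
    _ ≤ ∑ r : Fin t → S, P r * B r ^ 2 := hCS
    _ ≤ 2 * ∑ r : Fin t → S, P r * D r := hPB2
    _ = 2 * (entL p (k + t) + ((k:ℝ) - 1) * entL p t - (k:ℝ) * entL p (t + 1)) := by
        rw [hE]

end Comb

/-- de Finetti corollary for permutation-symmetric distributions: if p on Σ^n is invariant
under all permutations of the coordinates, then its marginal on the first k coordinates is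
within L1 distance sqrt(2 k² ln|Σ| / (n-k)) of a convex mixture of i.i.d. product
distributions. -/
theorem symmetric_deFinetti {n k : ℕ} {S : Type*} [Fintype S]
    (p : (Fin n → S) → ℝ) (hpos : ∀ w, 0 ≤ p w) (hsum : ∑ w, p w = 1)
    (hsymm : ∀ (π : Equiv.Perm (Fin n)) (w : Fin n → S), p (w ∘ π) = p w)
    (hkn : k < n) :
    ∃ (N : ℕ) (wt : Fin N → ℝ) (q : Fin N → S → ℝ),
      (∀ j, 0 ≤ wt j) ∧ (∑ j, wt j = 1) ∧
      (∀ j, (∀ s, 0 ≤ q j s) ∧ ∑ s, q j s = 1) ∧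
      ∑ y : Fin k → S,
          |(∑ w : Fin n → S,
              if ∀ a : Fin k, w (Fin.castLE hkn.le a) = y a then p w else 0) -
            ∑ j, wt j * ∏ a : Fin k, q j (y a)|
        ≤ Real.sqrt (2 * k ^ 2 * Real.log (Fintype.card S) / (n - k)) := by
  classical
  have hcard : 0 < Fintype.card S := by
    rcases Nat.eq_zero_or_pos (Fintype.card S) with h0 | h
    · exfalso
      have hemp : IsEmpty S := Fintype.card_eq_zero_iff.mp h0
      have hno : ∀ w : Fin n → S, False := fun w => hemp.false (w ⟨0, by omega⟩)
      rw [Finset.sum_eq_zero (fun w _ => (hno w).elim)] at hsum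
      norm_num at hsum
    · exact h
  set C := Real.log (Fintype.card S) with hC
  have hC0 : 0 ≤ C := Real.log_nonneg (by exact_mod_cast hcard)
  set d : ℕ → ℝ := fun j => entL p j - entL p (j + 1) with hd
  have hd0 : ∀ j, j + 1 ≤ n → 0 ≤ d j := fun j hj => sub_nonneg.mpr (entL_succ_le hpos hj)
  have hdC : ∀ j, j + 1 ≤ n → d j ≤ C := fun j hj => entL_succ_ge hpos hsum hj hcard
  set T := n - k with hT
  have hT0 : 0 < T := by omega
  have hk : k ≤ n := hkn.le
  -- telescoping bound on the sum of the entropy gaps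
  have hstep : ∀ t : ℕ, entL p t - entL p (t + k) = ∑ j ∈ Finset.range k, d (t + j) := by
    intro t
    exact (Finset.sum_range_sub' (fun j => entL p (t + j)) k).symm
  have hperj : ∀ j, j < k →
      ∑ t ∈ Finset.range T, d t - ∑ t ∈ Finset.range T, d (t + j) ≤ (k:ℝ) * C := by
    intro j hj
    have hre : ∑ t ∈ Finset.range T, d (t + j) = ∑ t ∈ Finset.Ico j (T + j), d t := by
      rw [Finset.sum_Ico_eq_sum_range]
      simp only [Nat.add_sub_cancel]
      refine Finset.sum_congr rfl (fun i _ => ?_)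
      rw [Nat.add_comm]
    have hsplit1 : ∑ t ∈ Finset.Ico 0 T, d t + ∑ t ∈ Finset.Ico T (T + j), d t =
        ∑ t ∈ Finset.Ico 0 (T + j), d t :=
      Finset.sum_Ico_consecutive _ (Nat.zero_le T) (Nat.le_add_right T j)
    have hsplit2 : ∑ t ∈ Finset.Ico 0 j, d t + ∑ t ∈ Finset.Ico j (T + j), d t =
        ∑ t ∈ Finset.Ico 0 (T + j), d t :=
      Finset.sum_Ico_consecutive _ (Nat.zero_le j) (by omega)
    have h1 : ∑ t ∈ Finset.Ico 0 j, d t ≤ (k:ℝ) * C := by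
      calc ∑ t ∈ Finset.Ico 0 j, d t ≤ ∑ t ∈ Finset.Ico 0 j, C := by
            refine Finset.sum_le_sum (fun i hi => ?_)
            have : i < j := (Finset.mem_Ico.mp hi).2
            exact hdC i (by omega)
        _ = (j:ℝ) * C := by
            rw [Finset.sum_const, Nat.card_Ico, nsmul_eq_mul]
            norm_num
        _ ≤ (k:ℝ) * C := by
            have : (j:ℝ) ≤ (k:ℝ) := by exact_mod_cast hj.le
            nlinarith
    have h2 : 0 ≤ ∑ t ∈ Finset.Ico T (T + j), d t := by
      refine Finset.sum_nonneg (fun i hi => ?_)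
      have h3 := (Finset.mem_Ico.mp hi).2
      exact hd0 i (by omega)
    rw [hre, Finset.range_eq_Ico]
    linarith
  have htel : ∑ t ∈ Finset.range T, ((k:ℝ) * d t - (entL p t - entL p (t + k))) ≤
      (k:ℝ) ^ 2 * C := by
    calc ∑ t ∈ Finset.range T, ((k:ℝ) * d t - (entL p t - entL p (t + k)))
        = ∑ t ∈ Finset.range T, ∑ j ∈ Finset.range k, (d t - d (t + j)) := by
          refine Finset.sum_congr rfl (fun t _ => ?_)
          rw [hstep t,
            Finset.sum_sub_distrib (f := fun _ => d t) (g := fun j => d (t + j)),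
            Finset.sum_const, Finset.card_range, nsmul_eq_mul]
      _ = ∑ j ∈ Finset.range k, ∑ t ∈ Finset.range T, (d t - d (t + j)) := Finset.sum_comm
      _ = ∑ j ∈ Finset.range k,
            (∑ t ∈ Finset.range T, d t - ∑ t ∈ Finset.range T, d (t + j)) :=
          Finset.sum_congr rfl (fun j _ => Finset.sum_sub_distrib _ _)
      _ ≤ ∑ j ∈ Finset.range k, (k:ℝ) * C :=
          Finset.sum_le_sum (fun j hj => hperj j (Finset.mem_range.mp hj))
      _ = (k:ℝ) ^ 2 * C := by
          rw [Finset.sum_const, Finset.card_range, nsmul_eq_mul]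
          ring
  have hTne : (T:ℝ) ≠ 0 := by
    have : (0:ℝ) < (T:ℝ) := by exact_mod_cast hT0
    linarith
  have hexists : ∃ t ∈ Finset.range T,
      (k:ℝ) * d t - (entL p t - entL p (t + k)) ≤ (k:ℝ) ^ 2 * C / T := by
    apply Finset.exists_le_of_sum_le (Finset.nonempty_range_iff.mpr hT0.ne')
    calc ∑ t ∈ Finset.range T, ((k:ℝ) * d t - (entL p t - entL p (t + k)))
        ≤ (k:ℝ) ^ 2 * C := htel
      _ = ∑ t ∈ Finset.range T, ((k:ℝ) ^ 2 * C / T) := by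
          rw [Finset.sum_const, Finset.card_range, nsmul_eq_mul]
          field_simp
  obtain ⟨t, htmem, hbound⟩ := hexists
  have htT : t < T := Finset.mem_range.mp htmem
  have hkt : k + t ≤ n := by omega
  have ht1 : t + 1 ≤ n := by omega
  have ht : t ≤ n := by omega
  obtain ⟨q, hq, hqbound⟩ := block_l1_bound hpos hsum hsymm hkt ht1 hcard hk ht
  have hEd : entL p (k + t) + ((k:ℝ) - 1) * entL p t - (k:ℝ) * entL p (t + 1) =
      (k:ℝ) * d t - (entL p t - entL p (t + k)) := by
    have h1 : entL p (k + t) = entL p (t + k) := by rw [Nat.add_comm]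
    rw [h1, hd]
    ring
  have hTcast : (T:ℝ) = (n:ℝ) - (k:ℝ) := by
    rw [hT, Nat.cast_sub hk]
  set e := Fintype.equivFin (Fin t → S) with he
  refine ⟨Fintype.card (Fin t → S), fun j => marg p t ht (e.symm j),
    fun j => q (e.symm j), fun j => marg_nonneg hpos ht _, ?_, fun j => hq _, ?_⟩
  · rw [← marg_total hsum ht (p := p)]
    exact Fintype.sum_equiv e.symm _ _ (fun j => rfl)
  · have hmix : ∀ y : Fin k → S,
        ∑ j, marg p t ht (e.symm j) * ∏ a : Fin k, q (e.symm j) (y a) =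
        ∑ r : Fin t → S, marg p t ht r * ∏ a : Fin k, q r (y a) :=
      fun y => Fintype.sum_equiv e.symm _ _ (fun j => rfl)
    have hmarg : ∀ y : Fin k → S,
        (∑ w : Fin n → S,
          if ∀ a : Fin k, w (Fin.castLE hkn.le a) = y a then p w else 0) =
        marg p k hk y := fun y => rfl
    have hLHS : ∑ y : Fin k → S,
        |(∑ w : Fin n → S,
            if ∀ a : Fin k, w (Fin.castLE hkn.le a) = y a then p w else 0) -
          ∑ j, marg p t ht (e.symm j) * ∏ a : Fin k, q (e.symm j) (y a)| =
        ∑ y : Fin k → S, |marg p k hk y -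
          ∑ r : Fin t → S, marg p t ht r * ∏ a : Fin k, q r (y a)| := by
      refine Finset.sum_congr rfl (fun y _ => ?_)
      rw [hmarg y, hmix y]
    rw [hLHS]
    have hZ0 : 0 ≤ ∑ y : Fin k → S, |marg p k hk y -
        ∑ r : Fin t → S, marg p t ht r * ∏ a : Fin k, q r (y a)| :=
      Finset.sum_nonneg (fun y _ => abs_nonneg _)
    have hZsq : (∑ y : Fin k → S, |marg p k hk y -
        ∑ r : Fin t → S, marg p t ht r * ∏ a : Fin k, q r (y a)|) ^ 2 ≤
        2 * k ^ 2 * Real.log (Fintype.card S) / (n - k) := by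
      calc (∑ y : Fin k → S, |marg p k hk y -
            ∑ r : Fin t → S, marg p t ht r * ∏ a : Fin k, q r (y a)|) ^ 2
          ≤ 2 * (entL p (k + t) + ((k:ℝ) - 1) * entL p t - (k:ℝ) * entL p (t + 1)) :=
            hqbound
        _ ≤ 2 * ((k:ℝ) ^ 2 * C / T) := by
            rw [hEd]
            linarith
        _ = 2 * k ^ 2 * Real.log (Fintype.card S) / (n - k) := by
            rw [hTcast, hC]
            ring
    have := Real.sqrt_le_sqrt hZsq
    rwa [Real.sqrt_sq hZ0] at this
end

section
/- Every dimension d admits a 4-design of size at most d^8: there exists a finite set of pure states {|φ_x⟩} in C^d with a probability distribution {p_x}, with at most d^8 elements, such that Σ_x p_x (|φ_x⟩⟨φ_x|)^{⊗4} equals the maximally mixed state on the symmetric subspace of (C^d)^{⊗4}. -/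
open Finset
open scoped Classical BigOperators ComplexOrder

/-- Trace norm of a complex matrix: the trace of the positive square root of AᴴA. -/
noncomputable def traceNorm {n : Type*} [Fintype n] [DecidableEq n]
    (A : Matrix n n ℂ) : ℝ :=
  (((Matrix.posSemidef_conjTranspose_mul_self A).1.eigenvectorUnitary : Matrix n n ℂ) *
      Matrix.diagonal (((↑) : ℝ → ℂ) ∘ (√·) ∘ (Matrix.posSemidef_conjTranspose_mul_self A).1.eigenvalues) *
      (star (Matrix.posSemidef_conjTranspose_mul_self A).1.eigenvectorUnitary : Matrix n n ℂ)).trace.re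

/-- Tensor (Kronecker) product of k matrices of size d, acting on (C^d)^{⊗k},
whose index set is Fin k → Fin d. -/
noncomputable def piKron {k d : ℕ} (M : Fin k → Matrix (Fin d) (Fin d) ℂ) :
    Matrix (Fin k → Fin d) (Fin k → Fin d) ℂ :=
  Matrix.of fun f g => ∏ i, M i (f i) (g i)

/-- The rank-one projector |v⟩⟨v| associated to a vector v in C^d. -/
noncomputable def vecProj {d : ℕ} (v : Fin d → ℂ) : Matrix (Fin d) (Fin d) ℂ :=
  Matrix.of fun i j => v i * star (v j)

/-- Von Neumann entropy (in nats) of a Hermitian matrix, via its eigenvalues. -/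
noncomputable def vN {n : Type*} [Fintype n] [DecidableEq n] (A : Matrix n n ℂ) : ℝ :=
  if h : A.IsHermitian then -∑ i, h.eigenvalues i * Real.log (h.eigenvalues i) else 0

/-- The permutation operator on (C^d)^{⊗4} associated to a permutation of the four factors. -/
noncomputable def permMat (d : ℕ) (π : Equiv.Perm (Fin 4)) :
    Matrix (Fin 4 → Fin d) (Fin 4 → Fin d) ℂ :=
  Matrix.of fun f g => if ∀ i, g i = f (π i) then 1 else 0

/-- The orthogonal projector onto the symmetric subspace of (C^d)^{⊗4}: the average of
all permutation operators. -/
noncomputable def symProj4 (d : ℕ) : Matrix (Fin 4 → Fin d) (Fin 4 → Fin d) ℂ :=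
  ((Nat.factorial 4 : ℂ))⁻¹ • ∑ π : Equiv.Perm (Fin 4), permMat d π


lemma aux_card_equiv (α β : Type*) [Fintype α] [Fintype β] :
    Fintype.card (α ≃ β) =
      if Fintype.card α = Fintype.card β then (Fintype.card α).factorial else 0 := by
  split_ifs with h
  · exact Fintype.card_equiv (Fintype.equivOfCardEq h)
  · have : IsEmpty (α ≃ β) := ⟨fun e => h (Fintype.card_congr e)⟩
    exact Fintype.card_eq_zero

def permFiberEquiv {d : ℕ} (f g : Fin 4 → Fin d) :
    {π : Equiv.Perm (Fin 4) // ∀ i, f (π i) = g i} ≃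
      (∀ j : Fin d, {i // g i = j} ≃ {i // f i = j}) where
  toFun := fun ⟨π, hπ⟩ j =>
    { toFun := fun x => ⟨π x.1, by rw [hπ]; exact x.2⟩
      invFun := fun x => ⟨π.symm x.1, by
        have h := hπ (π.symm x.1)
        rw [Equiv.apply_symm_apply] at h
        rw [← h]; exact x.2⟩
      left_inv := fun x => by simp
      right_inv := fun x => by simp }
  invFun := fun F =>
    ⟨{ toFun := fun i => (F (g i) ⟨i, rfl⟩).1
       invFun := fun i => ((F (f i)).symm ⟨i, rfl⟩).1
       left_inv := by
         intro i
         have key : ∀ (j : Fin d) (x : Fin 4) (hx : f x = j),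
             ((F j).symm ⟨x, hx⟩).1 = ((F (f x)).symm ⟨x, rfl⟩).1 := by
           intro j x hx; subst hx; rfl
         have hx : f ((F (g i) ⟨i, rfl⟩ : {i' // f i' = g i}) : Fin 4) = g i :=
           (F (g i) ⟨i, rfl⟩).2
         show ((F (f ((F (g i) ⟨i, rfl⟩ : {i' // f i' = g i}) : Fin 4))).symm ⟨_, rfl⟩).1 = i
         rw [← key (g i) _ hx]
         have : (⟨_, hx⟩ : {i' // f i' = g i}) = F (g i) ⟨i, rfl⟩ := Subtype.ext rfl
         rw [this, Equiv.symm_apply_apply]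
       right_inv := by
         intro i
         have key : ∀ (j : Fin d) (x : Fin 4) (hx : g x = j),
             ((F j) ⟨x, hx⟩).1 = ((F (g x)) ⟨x, rfl⟩).1 := by
           intro j x hx; subst hx; rfl
         have hx : g (((F (f i)).symm ⟨i, rfl⟩ : {i' // g i' = f i}) : Fin 4) = f i :=
           ((F (f i)).symm ⟨i, rfl⟩).2
         show ((F (g (((F (f i)).symm ⟨i, rfl⟩ : {i' // g i' = f i}) : Fin 4))) ⟨_, rfl⟩).1 = i
         rw [← key (f i) _ hx]
         have : (⟨_, hx⟩ : {i' // g i' = f i}) = (F (f i)).symm ⟨i, rfl⟩ := Subtype.ext rfl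
         rw [this, Equiv.apply_symm_apply] },
     fun i => (F (g i) ⟨i, rfl⟩).2⟩
  left_inv := fun ⟨π, hπ⟩ => by
    apply Subtype.ext
    apply Equiv.ext
    intro i
    rfl
  right_inv := fun F => by
    funext j
    apply Equiv.ext
    intro x
    apply Subtype.ext
    obtain ⟨i, hi⟩ := x
    subst hi
    rfl

lemma aux_nat_card_equiv (α β : Type*) [Fintype α] [Fintype β] :
    Nat.card (α ≃ β) =
      if Nat.card α = Nat.card β then (Nat.card α).factorial else 0 := by
  simp only [Nat.card_eq_fintype_card]
  exact aux_card_equiv α β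

lemma perm_count {d : ℕ} (f g : Fin 4 → Fin d) :
    Nat.card {π : Equiv.Perm (Fin 4) // ∀ i, f (π i) = g i} =
      ∏ j : Fin d,
        if Nat.card {i // g i = j} = Nat.card {i // f i = j}
        then (Nat.card {i // g i = j}).factorial else 0 := by
  rw [Nat.card_congr (permFiberEquiv f g), Nat.card_pi]
  exact Finset.prod_congr rfl fun j _ => aux_nat_card_equiv _ _

noncomputable def zeta5 : ℂ := Complex.exp (2 * Real.pi * Complex.I / 5)

lemma zeta5_prim : IsPrimitiveRoot zeta5 5 := Complex.isPrimitiveRoot_exp 5 (by norm_num)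

lemma zeta5_pow_five : zeta5 ^ 5 = 1 := zeta5_prim.pow_eq_one

lemma zeta5_conj : (starRingEnd ℂ) zeta5 = zeta5 ^ 4 := by
  have h1 : zeta5 * (starRingEnd ℂ) zeta5 = 1 := by
    rw [Complex.mul_conj]
    norm_cast
    rw [Complex.normSq_eq_norm_sq]
    have : zeta5 = Complex.exp ((2 * Real.pi / 5 : ℝ) * Complex.I) := by
      unfold zeta5; push_cast; ring_nf
    rw [this, Complex.norm_exp_ofReal_mul_I]
    norm_num
  have h2 : zeta5 * zeta5 ^ 4 = 1 := by
    rw [← pow_succ']; exact zeta5_pow_five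
  have hz : zeta5 ≠ 0 := by
    intro h; rw [h] at h2; simp at h2
  field_simp at h1 h2 ⊢
  rw [← h2] at h1
  exact mul_left_cancel₀ hz (h1.trans (by ring))

lemma phase_sum (c : ℕ) :
    (∑ m : Fin 5, zeta5 ^ (c * (m : ℕ))) = if (5 : ℕ) ∣ c then 5 else 0 := by
  have key : ∀ m : Fin 5, zeta5 ^ (c * (m : ℕ)) = (zeta5 ^ c) ^ (m : ℕ) := fun m => by
    rw [pow_mul]
  simp only [key]
  split_ifs with h
  · obtain ⟨e, rfl⟩ := h
    have : zeta5 ^ (5 * e) = 1 := by rw [pow_mul, zeta5_pow_five, one_pow]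
    simp [this]
  · have hne : zeta5 ^ c ≠ 1 := fun hc => h (zeta5_prim.dvd_of_pow_eq_one c hc)
    rw [Fin.sum_univ_eq_sum_range (fun m => (zeta5 ^ c) ^ m), geom_sum_eq hne]
    rw [← pow_mul]
    rw [mul_comm c 5, pow_mul, zeta5_pow_five, one_pow]
    simp

noncomputable def tvals : Fin 4 → ℝ := ![0, 1, 2, 5]
noncomputable def qvals : Fin 4 → ℝ := ![3/10, 1/2, 1/6, 1/30]

lemma tvals_nonneg (k : Fin 4) : 0 ≤ tvals k := by
  fin_cases k <;> norm_num [tvals]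

lemma qvals_nonneg (k : Fin 4) : 0 ≤ qvals k := by
  fin_cases k <;> norm_num [qvals]

lemma radial_moment (a : ℕ) (ha : a ≤ 4) :
    ∑ k, qvals k * tvals k ^ a = (a.factorial : ℝ) := by
  interval_cases a <;>
    norm_num [Fin.sum_univ_four, tvals, qvals, Nat.factorial, Matrix.cons_val_two, Matrix.cons_val_three]

noncomputable def wval : Fin 5 × Fin 4 → ℂ :=
  fun w => zeta5 ^ (w.1 : ℕ) * (Real.sqrt (tvals w.2) : ℂ)

noncomputable def wprob : Fin 5 × Fin 4 → ℝ := fun w => qvals w.2 / 5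

lemma wprob_nonneg (w : Fin 5 × Fin 4) : 0 ≤ wprob w := by
  have := qvals_nonneg w.2; unfold wprob; positivity

lemma moment (a b : ℕ) (ha : a ≤ 4) (hb : b ≤ 4) :
    ∑ w : Fin 5 × Fin 4, (wprob w : ℂ) * wval w ^ a * (starRingEnd ℂ) (wval w) ^ b =
      if a = b then (a.factorial : ℂ) else 0 := by
  have hterm : ∀ (m : Fin 5) (k : Fin 4),
      (wprob (m, k) : ℂ) * wval (m, k) ^ a * (starRingEnd ℂ) (wval (m, k)) ^ b =
        ((qvals k / 5 : ℝ) : ℂ) * ((Real.sqrt (tvals k) : ℂ)) ^ (a + b) *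
          zeta5 ^ ((a + 4 * b) * (m : ℕ)) := by
    intro m k
    have hconj : (starRingEnd ℂ) (wval (m, k)) =
        zeta5 ^ (4 * (m : ℕ)) * (Real.sqrt (tvals k) : ℂ) := by
      unfold wval
      rw [map_mul, map_pow, zeta5_conj, Complex.conj_ofReal, ← pow_mul]
    rw [hconj]
    unfold wval wprob
    rw [mul_pow, mul_pow, ← pow_mul, ← pow_mul,
      show (a + 4 * b) * (m : ℕ) = (m : ℕ) * a + 4 * (m : ℕ) * b by ring, pow_add,
      pow_add]
    push_cast
    ring
  rw [Fintype.sum_prod_type]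
  simp only [hterm]
  rw [Finset.sum_comm]
  have hfact : ∀ k : Fin 4,
      (∑ m : Fin 5, ((qvals k / 5 : ℝ) : ℂ) * ((Real.sqrt (tvals k) : ℂ)) ^ (a + b) *
        zeta5 ^ ((a + 4 * b) * (m : ℕ))) =
      ((qvals k / 5 : ℝ) : ℂ) * ((Real.sqrt (tvals k) : ℂ)) ^ (a + b) *
        ∑ m : Fin 5, zeta5 ^ ((a + 4 * b) * (m : ℕ)) := by
    intro k; rw [Finset.mul_sum]
  simp only [hfact, phase_sum]
  have hdvd : ((5 : ℕ) ∣ a + 4 * b) ↔ a = b := by omega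
  by_cases hab : a = b
  · subst hab
    simp only [if_pos (hdvd.mpr rfl), if_pos rfl]
    have hr : ∀ k : Fin 4, ((Real.sqrt (tvals k) : ℂ)) ^ (a + a) = ((tvals k ^ a : ℝ) : ℂ) := by
      intro k
      rw [← Complex.ofReal_pow, show a + a = 2 * a by ring, pow_mul,
        Real.sq_sqrt (tvals_nonneg k)]
    simp only [hr]
    rw [← Finset.sum_mul]
    have hre : (∑ k, qvals k / 5 * tvals k ^ a) = (a.factorial : ℝ) / 5 := by
      rw [← radial_moment a ha, Finset.sum_div]
      exact Finset.sum_congr rfl fun k _ => by ring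
    have : (∑ k : Fin 4, ((qvals k / 5 : ℝ) : ℂ) * ((tvals k ^ a : ℝ) : ℂ)) =
        (((a.factorial : ℝ) / 5 : ℝ) : ℂ) := by
      rw [← hre]; push_cast; ring
    rw [this]
    push_cast
    field_simp
  · simp only [if_neg (fun h => hab (hdvd.mp h)), if_neg hab, mul_zero, Finset.sum_const_zero]


lemma wprob01 : wprob (0, 1) = 1 / 10 := by
  show qvals 1 / 5 = 1 / 10
  norm_num [qvals]

lemma wval01 : wval (0, 1) = 1 := by
  show zeta5 ^ ((0 : Fin 5) : ℕ) * (Real.sqrt (tvals 1) : ℂ) = 1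
  norm_num [tvals, Real.sqrt_one]

lemma prod_pow_fiber {d : ℕ} (h : Fin d → ℂ) (f : Fin 4 → Fin d) :
    ∏ i : Fin 4, h (f i) = ∏ j : Fin d, h j ^ (univ.filter fun i => f i = j).card := by
  rw [← Finset.prod_fiberwise_of_maps_to (g := f) (fun i _ => Finset.mem_univ (f i))
    (fun i => h (f i))]
  refine Finset.prod_congr rfl fun j _ => ?_
  have hcg : ∀ i ∈ univ.filter fun i => f i = j, h (f i) = h j := fun i hi => by
    rw [(Finset.mem_filter.mp hi).2]
  rw [Finset.prod_congr rfl hcg, Finset.prod_const]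

lemma filter_card_le4 {d : ℕ} (f : Fin 4 → Fin d) (j : Fin d) :
    (univ.filter fun i => f i = j).card ≤ 4 := by
  calc (univ.filter fun i => f i = j).card ≤ (univ : Finset (Fin 4)).card :=
        Finset.card_filter_le _ _
    _ = 4 := by simp

lemma main_id {d : ℕ} :
    ∑ x : Fin d → Fin 5 × Fin 4,
        ((∏ j, wprob (x j) : ℝ) : ℂ) • piKron (fun _ : Fin 4 => vecProj (fun j => wval (x j)))
      = ∑ π : Equiv.Perm (Fin 4), permMat d π := by
  apply Matrix.ext
  intro f g
  set a : Fin d → ℕ := fun j => (univ.filter fun i => f i = j).card with ha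
  set b : Fin d → ℕ := fun j => (univ.filter fun i => g i = j).card with hb
  have lhs_eq : (∑ x : Fin d → Fin 5 × Fin 4,
      ((∏ j, wprob (x j) : ℝ) : ℂ) • piKron (fun _ : Fin 4 => vecProj (fun j => wval (x j)))) f g
      = ∏ j : Fin d, if a j = b j then ((a j).factorial : ℂ) else 0 := by
    rw [Matrix.sum_apply]
    have hx : ∀ x : Fin d → Fin 5 × Fin 4,
        (((∏ j, wprob (x j) : ℝ) : ℂ) • piKron (fun _ : Fin 4 => vecProj (fun j => wval (x j)))) f g
        = ∏ j : Fin d, ((wprob (x j) : ℂ) * wval (x j) ^ (a j) *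
            (starRingEnd ℂ) (wval (x j)) ^ (b j)) := by
      intro x
      rw [Matrix.smul_apply, smul_eq_mul]
      show ((∏ j, wprob (x j) : ℝ) : ℂ) *
          ∏ i : Fin 4, (fun j => wval (x j)) (f i) * star ((fun j => wval (x j)) (g i)) = _
      rw [Finset.prod_mul_distrib, prod_pow_fiber (fun j => wval (x j)) f,
        prod_pow_fiber (fun j => star (wval (x j))) g]
      push_cast
      rw [← Finset.prod_mul_distrib, ← Finset.prod_mul_distrib]
      exact Finset.prod_congr rfl fun j _ => by
        simp only [Complex.star_def]; ring
    simp only [hx]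
    have step : (∑ x ∈ (univ : Finset (Fin d → Fin 5 × Fin 4)), ∏ j : Fin d,
        ((wprob (x j) : ℂ) * wval (x j) ^ (a j) * (starRingEnd ℂ) (wval (x j)) ^ (b j)))
        = ∏ j : Fin d, ∑ w : Fin 5 × Fin 4,
            ((wprob w : ℂ) * wval w ^ (a j) * (starRingEnd ℂ) (wval w) ^ (b j)) := by
      rw [← Fintype.piFinset_univ]
      exact (Finset.prod_univ_sum (fun _ : Fin d => (univ : Finset (Fin 5 × Fin 4)))
        (fun j w => (wprob w : ℂ) * wval w ^ (a j) * (starRingEnd ℂ) (wval w) ^ (b j))).symm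
    rw [step]
    exact Finset.prod_congr rfl fun j _ =>
      moment (a j) (b j) (filter_card_le4 f j) (filter_card_le4 g j)
  rw [lhs_eq, Matrix.sum_apply]
  have rhs_eq : (∑ π : Equiv.Perm (Fin 4), permMat d π f g) =
      ((univ.filter fun π : Equiv.Perm (Fin 4) => ∀ i, g i = f (π i)).card : ℂ) := by
    simp [permMat, Finset.sum_boole]
  rw [rhs_eq]
  have hcard : (univ.filter fun π : Equiv.Perm (Fin 4) => ∀ i, g i = f (π i)).card
      = Nat.card {π : Equiv.Perm (Fin 4) // ∀ i, f (π i) = g i} := by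
    rw [Nat.card_eq_fintype_card, Fintype.card_subtype]
    congr 1
    apply Finset.filter_congr
    intro π _
    simp [eq_comm]
  rw [hcard, perm_count f g]
  have hnc : ∀ (h : Fin 4 → Fin d) (j : Fin d),
      Nat.card {i // h i = j} = (univ.filter fun i => h i = j).card := by
    intro h j; rw [Nat.card_eq_fintype_card, Fintype.card_subtype]
  push_cast
  refine Finset.prod_congr rfl fun j _ => ?_
  rw [hnc f j, hnc g j]
  by_cases hab : a j = b j
  · rw [if_pos hab, if_pos hab.symm, hab]
  · rw [if_neg hab, if_neg (fun h => hab h.symm)]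

lemma trace_piKron {d : ℕ} (ψ : Fin d → ℂ) :
    (piKron fun _ : Fin 4 => vecProj ψ).trace = (∑ j, ψ j * star (ψ j)) ^ 4 := by
  unfold Matrix.trace
  have : ∀ f : Fin 4 → Fin d, Matrix.diag (piKron fun _ : Fin 4 => vecProj ψ) f
      = ∏ i : Fin 4, (fun j => ψ j * star (ψ j)) (f i) := fun f => rfl
  simp only [this]
  have step : (∑ f ∈ (univ : Finset (Fin 4 → Fin d)), ∏ i : Fin 4, (ψ (f i) * star (ψ (f i))))
      = ∏ _i : Fin 4, ∑ j : Fin d, (ψ j * star (ψ j)) := by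
    rw [← Fintype.piFinset_univ]
    exact (Finset.prod_univ_sum (fun _ : Fin 4 => (univ : Finset (Fin d)))
      (fun _ j => ψ j * star (ψ j))).symm
  rw [step, Finset.prod_const]
  simp

lemma herm_piKron {d : ℕ} (ψ : Fin d → ℂ) :
    (piKron fun _ : Fin 4 => vecProj ψ).IsHermitian := by
  unfold Matrix.IsHermitian
  apply Matrix.ext
  intro f g
  show (starRingEnd ℂ) (∏ i : Fin 4, ψ (g i) * star (ψ (f i))) = ∏ i : Fin 4, ψ (f i) * star (ψ (g i))
  rw [map_prod]
  exact Finset.prod_congr rfl fun i _ => by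
    simp only [Complex.star_def, map_mul, Complex.conj_conj]; ring

abbrev Emat (d : ℕ) := Matrix (Fin 4 → Fin d) (Fin 4 → Fin d) ℂ

section raw
variable {d : ℕ}

noncomputable def Qx (x : Fin d → Fin 5 × Fin 4) : ℝ := ∏ j, wprob (x j)
noncomputable def psix (x : Fin d → Fin 5 × Fin 4) : Fin d → ℂ := fun j => wval (x j)
noncomputable def nx (x : Fin d → Fin 5 × Fin 4) : ℝ := ∑ j, ‖psix x j‖ ^ 2

lemma Qx_nonneg (x : Fin d → Fin 5 × Fin 4) : 0 ≤ Qx x :=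
  Finset.prod_nonneg fun j _ => wprob_nonneg _

lemma nx_nonneg (x : Fin d → Fin 5 × Fin 4) : 0 ≤ nx x :=
  Finset.sum_nonneg fun j _ => sq_nonneg _

lemma sum_mul_conj (ψ : Fin d → ℂ) :
    (∑ j, ψ j * star (ψ j)) = (((∑ j, ‖ψ j‖ ^ 2 : ℝ)) : ℂ) := by
  push_cast
  refine Finset.sum_congr rfl fun j _ => ?_
  simp only [Complex.star_def, Complex.mul_conj, Complex.normSq_eq_norm_sq]
  norm_cast

lemma trace_piKron' (ψ : Fin d → ℂ) :
    (piKron fun _ : Fin 4 => vecProj ψ).trace = (((∑ j, ‖ψ j‖ ^ 2 : ℝ) ^ 4 : ℝ) : ℂ) := by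
  rw [trace_piKron, sum_mul_conj]
  push_cast
  ring

noncomputable def Tsum (d : ℕ) : ℝ := ∑ x : Fin d → Fin 5 × Fin 4, Qx x * nx x ^ 4

lemma perm_sum_eq : (∑ π : Equiv.Perm (Fin 4), permMat d π) = (24 : ℂ) • symProj4 d := by
  rw [symProj4, smul_smul]
  norm_num [Nat.factorial]

lemma Tsum_eq : ((Tsum d : ℝ) : ℂ) = 24 * (symProj4 d).trace := by
  have h := congrArg Matrix.trace (main_id (d := d))
  rw [Matrix.trace_sum] at h
  simp only [Matrix.trace_smul] at h
  rw [perm_sum_eq, Matrix.trace_smul] at h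
  have hl : ∑ x : Fin d → Fin 5 × Fin 4,
      ((∏ j, wprob (x j) : ℝ) : ℂ) • (piKron fun _ : Fin 4 => vecProj fun j => wval (x j)).trace
      = ((Tsum d : ℝ) : ℂ) := by
    rw [Tsum]
    push_cast
    refine Finset.sum_congr rfl fun x _ => ?_
    rw [trace_piKron' (fun j => wval (x j))]
    show _ • _ = _
    rw [smul_eq_mul]
    push_cast [Qx, nx, psix]
    ring
  rw [hl] at h
  rw [h, smul_eq_mul]

lemma Tsum_pos (hd : 0 < d) : 0 < Tsum d := by
  have hx0 : Qx (fun _ : Fin d => ((0 : Fin 5), (1 : Fin 4))) *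
      nx (fun _ : Fin d => ((0 : Fin 5), (1 : Fin 4))) ^ 4 > 0 := by
    have h1 : Qx (fun _ : Fin d => ((0 : Fin 5), (1 : Fin 4))) = (1/10) ^ d := by
      rw [Qx]
      simp [wprob01]
    have h2 : nx (fun _ : Fin d => ((0 : Fin 5), (1 : Fin 4))) = d := by
      rw [nx]
      simp [psix, wval01]
    rw [h1, h2]
    have : (0:ℝ) < d := by exact_mod_cast hd
    positivity
  refine lt_of_lt_of_le hx0 (Finset.single_le_sum (f := fun x => Qx x * nx x ^ 4)
    (fun x _ => mul_nonneg (Qx_nonneg x) (by positivity)) (Finset.mem_univ _))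

end raw

lemma raw_design (d : ℕ) (hd : 0 < d) :
    ∃ (p : (Fin d → Fin 5 × Fin 4) → ℝ) (φ : (Fin d → Fin 5 × Fin 4) → (Fin d → ℂ)),
      (∀ x, 0 ≤ p x) ∧ (∑ x, p x = 1) ∧ (∀ x, ∑ i, ‖φ x i‖ ^ 2 = 1) ∧
      ∑ x, (p x : ℂ) • piKron (fun _ : Fin 4 => vecProj (φ x)) =
        (symProj4 d).trace⁻¹ • symProj4 d := by
  have hT := Tsum_pos (d := d) hd
  have hTne : (Tsum d) ≠ 0 := ne_of_gt hT
  set T := Tsum d with hTdef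
  refine ⟨fun x => Qx x * nx x ^ 4 / T,
    fun x => if nx x = 0 then (fun j => if j = ⟨0, hd⟩ then 1 else 0)
      else (fun j => ((Real.sqrt (nx x))⁻¹ : ℝ) * psix x j), ?_, ?_, ?_, ?_⟩
  · intro x
    have := Qx_nonneg x; have := nx_nonneg x
    positivity
  · rw [← Finset.sum_div, ← Tsum]
    field_simp
    exact hTdef.symm
  · intro x
    by_cases hx : nx x = 0
    · simp only [if_pos hx]
      rw [Finset.sum_eq_single ⟨0, hd⟩]
      · simp
      · intro j _ hj; simp [hj]
      · intro h; exact absurd (Finset.mem_univ _) h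
    · simp only [if_neg hx]
      have hnx : 0 < nx x := lt_of_le_of_ne (nx_nonneg x) (Ne.symm hx)
      have : ∀ j, ‖((Real.sqrt (nx x))⁻¹ : ℝ) * psix x j‖ ^ 2
          = (nx x)⁻¹ * ‖psix x j‖ ^ 2 := by
        intro j
        have hc : ‖(((Real.sqrt (nx x))⁻¹ : ℝ) : ℂ)‖ = (Real.sqrt (nx x))⁻¹ := by
          rw [Complex.norm_real]
          exact abs_of_nonneg (by positivity)
        push_cast
        rw [norm_mul, mul_pow, norm_inv]
        congr 1
        rw [inv_pow]
        congr 1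
        rw [Complex.norm_real, Real.norm_eq_abs, sq_abs, Real.sq_sqrt (le_of_lt hnx)]
      simp only [this]
      rw [← Finset.mul_sum, ← nx]
      field_simp
  · have key : ∀ x : Fin d → Fin 5 × Fin 4,
        ((Qx x * nx x ^ 4 / T : ℝ) : ℂ) • piKron (fun _ : Fin 4 => vecProj
          (if nx x = 0 then (fun j => if j = ⟨0, hd⟩ then 1 else 0)
            else (fun j => ((Real.sqrt (nx x))⁻¹ : ℝ) * psix x j)))
        = ((T : ℝ) : ℂ)⁻¹ • (((Qx x : ℝ) : ℂ) • piKron (fun _ : Fin 4 => vecProj (psix x))) := by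
      intro x
      by_cases hx : nx x = 0
      · have hpsi0 : ∀ j, psix x j = 0 := by
          intro j
          have h := (Finset.sum_eq_zero_iff_of_nonneg (fun i _ => sq_nonneg ‖psix x i‖)).mp hx j
            (Finset.mem_univ j)
          have : ‖psix x j‖ = 0 := by
            have := sq_eq_zero_iff.mp h; exact this
          exact norm_eq_zero.mp this
        have hM0 : piKron (fun _ : Fin 4 => vecProj (psix x)) = 0 := by
          apply Matrix.ext
          intro f g
          show (∏ i : Fin 4, psix x (f i) * star (psix x (g i))) = 0
          apply Finset.prod_eq_zero (Finset.mem_univ (0 : Fin 4))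
          rw [hpsi0 (f 0)]
          ring
        rw [hM0, hx]
        norm_num
      · have hnx : 0 < nx x := lt_of_le_of_ne (nx_nonneg x) (Ne.symm hx)
        simp only [if_neg hx]
        have hscale : piKron (fun _ : Fin 4 => vecProj
            (fun j => (((Real.sqrt (nx x))⁻¹ : ℝ) : ℂ) * psix x j))
            = ((((nx x) ^ 4)⁻¹ : ℝ) : ℂ) • piKron (fun _ : Fin 4 => vecProj (psix x)) := by
          apply Matrix.ext
          intro f g
          show (∏ i : Fin 4, ((((Real.sqrt (nx x))⁻¹ : ℝ) : ℂ) * psix x (f i)) *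
              star (((((Real.sqrt (nx x))⁻¹ : ℝ)) : ℂ) * psix x (g i)))
            = ((((nx x) ^ 4)⁻¹ : ℝ) : ℂ) * ∏ i : Fin 4, psix x (f i) * star (psix x (g i))
          have hper : ∀ i : Fin 4, ((((Real.sqrt (nx x))⁻¹ : ℝ) : ℂ) * psix x (f i)) *
              star (((((Real.sqrt (nx x))⁻¹ : ℝ)) : ℂ) * psix x (g i))
              = ((((Real.sqrt (nx x))⁻¹ : ℝ) : ℂ) * (((Real.sqrt (nx x))⁻¹ : ℝ) : ℂ)) *
                (psix x (f i) * star (psix x (g i))) := by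
            intro i
            simp only [Complex.star_def, map_mul, Complex.conj_ofReal]
            ring
          simp only [hper]
          rw [Finset.prod_mul_distrib, Finset.prod_const, Finset.card_univ]
          have : ((((Real.sqrt (nx x))⁻¹ : ℝ) : ℂ) * (((Real.sqrt (nx x))⁻¹ : ℝ) : ℂ))
              ^ (Fintype.card (Fin 4)) = ((((nx x) ^ 4)⁻¹ : ℝ) : ℂ) := by
            have hs : (Real.sqrt (nx x))⁻¹ * (Real.sqrt (nx x))⁻¹ = (nx x)⁻¹ := by
              rw [← mul_inv]
              congr 1
              exact Real.mul_self_sqrt (le_of_lt hnx)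
            push_cast
            rw [Fintype.card_fin, ← mul_inv, ← inv_pow]
            congr 1
            rw [← Complex.ofReal_mul, Real.mul_self_sqrt (le_of_lt hnx)]
          rw [this]
        rw [hscale, smul_smul, smul_smul]
        congr 1
        have hnC : ((nx x : ℝ) : ℂ) ≠ 0 := by exact_mod_cast hx
        have hTC : ((T : ℝ) : ℂ) ≠ 0 := by exact_mod_cast hTne
        push_cast
        field_simp
    simp only [key]
    rw [← Finset.smul_sum]
    have : (∑ x : Fin d → Fin 5 × Fin 4, ((Qx x : ℝ) : ℂ) •
        piKron (fun _ : Fin 4 => vecProj (psix x))) = (24 : ℂ) • symProj4 d := by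
      rw [← perm_sum_eq, ← main_id]
      rfl
    rw [this, smul_smul]
    congr 1
    have hs := Tsum_eq (d := d)
    have hTC : ((T : ℝ) : ℂ) ≠ 0 := by exact_mod_cast hTne
    have hsne : (symProj4 d).trace ≠ 0 := by
      intro h0
      rw [h0, mul_zero] at hs
      exact hTC hs
    rw [hs]
    field_simp

section carath
variable {d : ℕ}

noncomputable def W0 (d : ℕ) : Submodule ℝ (Emat d) where
  carrier := {A | A.IsHermitian ∧ A.trace.re = 0}
  zero_mem' := by
    refine ⟨Matrix.isHermitian_zero, by simp⟩
  add_mem' := by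
    rintro A B ⟨hA1, hA2⟩ ⟨hB1, hB2⟩
    refine ⟨hA1.add hB1, ?_⟩
    rw [Matrix.trace_add, Complex.add_re, hA2, hB2, add_zero]
  smul_mem' := by
    rintro r A ⟨hA1, hA2⟩
    constructor
    · unfold Matrix.IsHermitian at *
      rw [Matrix.conjTranspose_smul, star_trivial, hA1]
    · rw [Matrix.trace_smul, Complex.smul_re, hA2, smul_zero]

lemma mem_W0 {A : Emat d} : A ∈ W0 d ↔ A.IsHermitian ∧ A.trace.re = 0 := Iff.rfl

noncomputable def flatMap (d : ℕ) (hd : 0 < d) (e : (Fin 4 → Fin d) → ℕ) :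
    Emat d →ₗ[ℝ] ({q : (Fin 4 → Fin d) × (Fin 4 → Fin d) //
      q ≠ ((fun _ => ⟨0, hd⟩), (fun _ => ⟨0, hd⟩))} → ℝ) where
  toFun A := fun q =>
    if e q.1.1 ≤ e q.1.2 then (A q.1.1 q.1.2).re else (A q.1.1 q.1.2).im
  map_add' A B := by
    funext q
    by_cases h : e q.1.1 ≤ e q.1.2 <;> simp [h, Matrix.add_apply]
  map_smul' r A := by
    funext q
    by_cases h : e q.1.1 ≤ e q.1.2 <;>
      simp [h, Matrix.smul_apply, Complex.smul_re, Complex.smul_im]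

lemma flatMap_inj (hd : 0 < d) (e : (Fin 4 → Fin d) → ℕ) (he : Function.Injective e)
    (A : Emat d) (hA : A.IsHermitian) (htr : A.trace.re = 0)
    (h0 : flatMap d hd e A = 0) : A = 0 := by
  set z0 : Fin 4 → Fin d := fun _ => ⟨0, hd⟩ with hz0
  have hval : ∀ q : (Fin 4 → Fin d) × (Fin 4 → Fin d), q ≠ (z0, z0) →
      (if e q.1 ≤ e q.2 then (A q.1 q.2).re else (A q.1 q.2).im) = 0 := by
    intro q hq
    exact congrFun h0 ⟨q, hq⟩
  have herm : ∀ i j, A j i = (starRingEnd ℂ) (A i j) := by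
    intro i j
    have := congrFun (congrFun hA j) i
    simpa [Matrix.conjTranspose_apply] using this.symm
  have hdiag_im : ∀ i, (A i i).im = 0 := by
    intro i
    have h := congrArg Complex.im (herm i i)
    rw [Complex.conj_im] at h
    linarith
  have hdiag_re : ∀ i, i ≠ z0 → (A i i).re = 0 := by
    intro i hi
    have h := hval (i, i) (by
      intro h
      exact hi (Prod.ext_iff.mp h).1)
    rw [if_pos (le_refl _)] at h
    exact h
  have hz0_re : (A z0 z0).re = 0 := by
    have hs : A.trace.re = ∑ i, (A i i).re := Complex.re_sum _ _
    rw [hs, Finset.sum_eq_single z0 (fun i _ hi => hdiag_re i hi)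
      (fun h => absurd (Finset.mem_univ _) h)] at htr
    exact htr
  apply Matrix.ext
  intro i j
  have hprodne : ∀ (i' j' : Fin 4 → Fin d), i' ≠ j' →
      ((i', j') : _ × _) ≠ (z0, z0) := by
    intro i' j' hij h
    obtain ⟨h1, h2⟩ := Prod.ext_iff.mp h
    exact hij (h1.trans h2.symm)
  rcases lt_trichotomy (e i) (e j) with hlt | heq | hgt
  · have hij : i ≠ j := fun h => by rw [h] at hlt; exact lt_irrefl _ hlt
    have hre := hval (i, j) (hprodne i j hij)
    rw [if_pos (le_of_lt hlt)] at hre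
    have him := hval (j, i) (hprodne j i (Ne.symm hij))
    rw [if_neg (not_le_of_gt hlt)] at him
    have him' : (A i j).im = 0 := by
      rw [herm j i, Complex.conj_im, him, neg_zero]
    exact Complex.ext hre him'
  · have hij : i = j := he heq
    subst hij
    by_cases hiz : i = z0
    · subst hiz
      exact Complex.ext hz0_re (hdiag_im _)
    · exact Complex.ext (hdiag_re i hiz) (hdiag_im _)
  · have hij : i ≠ j := fun h => by rw [h] at hgt; exact lt_irrefl _ hgt
    have him := hval (i, j) (hprodne i j hij)
    rw [if_neg (not_le_of_gt hgt)] at him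
    have hre := hval (j, i) (hprodne j i (Ne.symm hij))
    rw [if_pos (le_of_lt hgt)] at hre
    have hre' : (A i j).re = 0 := by
      rw [herm j i, Complex.conj_re, hre]
    exact Complex.ext hre' him

lemma card_bound (hd : 0 < d) {ι : Type} [Fintype ι] (z : ι → Emat d)
    (hAI : AffineIndependent ℝ z) (hherm : ∀ i, (z i).IsHermitian)
    (htr : ∀ i, (z i).trace = 1) (hne : Nonempty ι) :
    Fintype.card ι ≤ d ^ 8 := by
  obtain ⟨i₀⟩ := hne
  rw [affineIndependent_iff_linearIndependent_vsub ℝ z i₀] at hAI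
  have hmem : ∀ i : {x : ι // x ≠ i₀}, (z (i : ι) -ᵥ z i₀) ∈ W0 d := by
    intro i
    refine ⟨(hherm i).sub (hherm i₀), ?_⟩
    show ((z (i:ι) - z i₀).trace).re = 0
    rw [Matrix.trace_sub, htr, htr]
    simp
  set e : (Fin 4 → Fin d) → ℕ := fun f => (Fintype.equivFin (Fin 4 → Fin d) f : ℕ) with he
  have heinj : Function.Injective e := by
    intro x y h
    exact (Fintype.equivFin (Fin 4 → Fin d)).injective (Fin.ext h)
  have hdisj0 : Disjoint (W0 d) (LinearMap.ker (flatMap d hd e)) := by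
    rw [Submodule.disjoint_def]
    intro A hA1 hA2
    exact flatMap_inj hd e heinj A (mem_W0.mp hA1).1 (mem_W0.mp hA1).2
      (LinearMap.mem_ker.mp hA2)
  have hdisj : Disjoint (Submodule.span ℝ (Set.range fun i : {x : ι // x ≠ i₀} =>
      z (i : ι) -ᵥ z i₀)) (LinearMap.ker (flatMap d hd e)) :=
    Disjoint.mono_left (Submodule.span_le.mpr (by rintro _ ⟨i, rfl⟩; exact hmem i)) hdisj0
  have hli := hAI.map hdisj
  have hcard := hli.fintype_card_le_finrank
  rw [Module.finrank_pi] at hcard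
  have hc1 : Fintype.card {q : (Fin 4 → Fin d) × (Fin 4 → Fin d) //
      q ≠ ((fun _ => ⟨0, hd⟩), (fun _ => ⟨0, hd⟩))} = d ^ 8 - 1 := by
    rw [Fintype.card_subtype_compl, Fintype.card_subtype_eq, Fintype.card_prod,
      Fintype.card_fun, Fintype.card_fin, Fintype.card_fin, ← pow_add]
  have hc2 : Fintype.card {x : ι // x ≠ i₀} = Fintype.card ι - 1 := by
    rw [Fintype.card_subtype_compl, Fintype.card_subtype_eq]
  rw [hc1, hc2] at hcard
  have h1 : 1 ≤ Fintype.card ι := Fintype.card_pos_iff.mpr ⟨i₀⟩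
  have h2 : 1 ≤ d ^ 8 := Nat.one_le_iff_ne_zero.mpr (pow_ne_zero _ (Nat.pos_iff_ne_zero.mp hd))
  omega

end carath

lemma real_smul_mat {d : ℕ} (r : ℝ) (A : Emat d) : (r : ℂ) • A = r • A := by
  apply Matrix.ext
  intro i j
  simp [Matrix.smul_apply, Complex.real_smul]


/-- Every dimension d admits a 4-design of size at most d^8: a finite ensemble of at most
d^8 pure states whose average fourth tensor power equals the maximally mixed state on the
symmetric subspace of (C^d)^{⊗4}. -/
theorem exists_four_design (d : ℕ) (hd : 0 < d) :
    ∃ N : ℕ, N ≤ d ^ 8 ∧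
      ∃ (p : Fin N → ℝ) (φ : Fin N → (Fin d → ℂ)),
        (∀ x, 0 ≤ p x) ∧ (∑ x, p x = 1) ∧
        (∀ x, ∑ i, ‖φ x i‖ ^ 2 = 1) ∧
        ∑ x, (p x : ℂ) • piKron (fun _ : Fin 4 => vecProj (φ x)) =
          (symProj4 d).trace⁻¹ • symProj4 d := by

  obtain ⟨p₀, φ₀, hp0, hps, hφn, heq⟩ := raw_design d hd
  set S : Set (Emat d) := {A | ∃ φ : Fin d → ℂ,
    (∑ i, ‖φ i‖ ^ 2 = 1) ∧ A = piKron (fun _ : Fin 4 => vecProj φ)} with hS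
  have hmem : (symProj4 d).trace⁻¹ • symProj4 d ∈ convexHull ℝ S := by
    refine mem_convexHull_of_exists_fintype p₀
      (fun x => piKron (fun _ : Fin 4 => vecProj (φ₀ x))) hp0 hps
      (fun x => ?_) ?_
    · exact ⟨φ₀ x, hφn x, rfl⟩
    · rw [← heq]
      exact Finset.sum_congr rfl fun x _ => (real_smul_mat (p₀ x) _).symm
  obtain ⟨ι, hfin, z, w, hzS, hAI, hwpos, hw1, hsum⟩ :=
    eq_pos_convex_span_of_mem_convexHull hmem
  letI : Fintype ι := hfin
  have hne : Nonempty ι := by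
    by_contra h
    rw [not_nonempty_iff] at h
    rw [Finset.univ_eq_empty, Finset.sum_empty] at hw1
    norm_num at hw1
  have hprops : ∀ i : ι, ((z i).IsHermitian ∧ (z i).trace = 1) := by
    intro i
    obtain ⟨φi, hφi, hzi⟩ := hzS (Set.mem_range_self i)
    constructor
    · rw [hzi]; exact herm_piKron φi
    · rw [hzi, trace_piKron', hφi]
      norm_num
  have hNle : Fintype.card ι ≤ d ^ 8 :=
    card_bound hd z hAI (fun i => (hprops i).1) (fun i => (hprops i).2) hne
  refine ⟨Fintype.card ι, hNle, ?_⟩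
  set e := (Fintype.equivFin ι).symm with he
  have hmemS : ∀ x : Fin (Fintype.card ι), z (e x) ∈ S :=
    fun x => hzS (Set.mem_range_self (e x))
  refine ⟨fun x => w (e x), fun x => Classical.choose (hmemS x), ?_, ?_, ?_, ?_⟩
  · exact fun x => (hwpos (e x)).le
  · rw [Equiv.sum_comp e w]
    exact hw1
  · exact fun x => (Classical.choose_spec (hmemS x)).1
  · have hz : ∀ x, piKron (fun _ : Fin 4 => vecProj (Classical.choose (hmemS x))) = z (e x) :=
      fun x => ((Classical.choose_spec (hmemS x)).2).symm
    calc ∑ x, ((w (e x) : ℝ) : ℂ) •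
          piKron (fun _ : Fin 4 => vecProj (Classical.choose (hmemS x)))
        = ∑ x, w (e x) • z (e x) := by
          refine Finset.sum_congr rfl fun x _ => ?_
          rw [hz x, real_smul_mat]
      _ = ∑ i, w i • z i := Equiv.sum_comp e (fun i => w i • z i)
      _ = (symProj4 d).trace⁻¹ • symProj4 d := hsum
end
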